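/- arXiv:2603.16005 — 4 statements merged into one kernel-verified Lean document; each statement's English description precedes it below -/
import Mathlib

section
/- Assume the cost c(x,y) = h(x−y) satisfies (H1)–(H3). Let u_1,…,u_n ∈ ℝ^d be distinct and x_1,…,x_n ∈ ℝ^d be distinct, with empirical measures Q_n and P_n. Then for every j ∈ {1,…,n}, the finite sample breakdown point of T_{Q_n→P_n}(u_j) lies in the interval [TD^−(u_j;Q_n) + 1/n, TD(u_j;Q_n)]. If moreover u_1,…,u_n are in general position and n ≥ d, then the finite sample breakdown point of T_{Q_n→P_n}(u_j) equals TD^−(u_j;Q_n) + 1/n. -/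
open Filter MeasureTheory Bornology Topology Set
open scoped RealInnerProductSpace ENNReal BigOperators Classical

noncomputable section

abbrev Euc (d : ℕ) := EuclideanSpace ℝ (Fin d)

/-- The cost function `c(x,y) = h(x-y)`. -/
def cost {d : ℕ} (h : Euc d → ℝ) (x y : Euc d) : ℝ := h (x - y)

/-- The truncated cone `Cone(r, θ, z, p)`. -/
def TruncCone {d : ℕ} (r θ : ℝ) (z p : Euc d) : Set (Euc d) :=
  {x | ‖x - p‖ * ‖z‖ * Real.cos (θ / 2) ≤ ⟪z, x - p⟫ ∧ ⟪z, x - p⟫ ≤ r * ‖z‖}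

/-- (H1): `h` is strictly convex. -/
def H1 {d : ℕ} (h : Euc d → ℝ) : Prop := StrictConvexOn ℝ Set.univ h

/-- (H2): for every height `r > 0` and angle `θ ∈ (0, π)` there is `M > 0` such that for every
`p` with `‖p‖ > M` there is a truncated cone with vertex `p` on which `h` attains its maximum
at `p`. -/
def H2 {d : ℕ} (h : Euc d → ℝ) : Prop :=
  ∀ r : ℝ, 0 < r → ∀ θ : ℝ, θ ∈ Set.Ioo 0 Real.pi → ∃ M : ℝ, 0 < M ∧
    ∀ p : Euc d, M < ‖p‖ → ∃ z : Euc d, z ≠ 0 ∧ ∀ x ∈ TruncCone r θ z p, h x ≤ h p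

/-- (H3): `h(x)/‖x‖ → ∞` as `‖x‖ → ∞`. -/
def H3 {d : ℕ} (h : Euc d → ℝ) : Prop :=
  ∀ C : ℝ, ∃ R : ℝ, ∀ x : Euc d, R ≤ ‖x‖ → C * ‖x‖ ≤ h x

/-- A function `f : ℝ^d → ℝ ∪ {-∞}` is `c`-concave if it is an infimum of functions
`x ↦ c(x,y) - t` over a nonempty family `𝒯` of pairs `(y,t)`. -/
def IsCConcave {d : ℕ} (h : Euc d → ℝ) (f : Euc d → EReal) : Prop :=
  ∃ T : Set (Euc d × ℝ), T.Nonempty ∧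
    ∀ x : Euc d, f x = ⨅ p ∈ T, ((cost h x p.1 - p.2 : ℝ) : EReal)

/-- The `c`-superdifferential of `f`, as a subset of `ℝ^d × ℝ^d`. -/
def CSuperdiff {d : ℕ} (h : Euc d → ℝ) (f : Euc d → EReal) : Set (Euc d × Euc d) :=
  {q | ∀ z : Euc d, f z ≤ f q.1 + ((cost h z q.2 - cost h q.1 q.2 : ℝ) : EReal)}

/-- `∂^c f(x)`. -/
def CSuperdiffAt {d : ℕ} (h : Euc d → ℝ) (f : Euc d → EReal) (x : Euc d) : Set (Euc d) :=
  {y | (x, y) ∈ CSuperdiff h f}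

/-- `∂^c f(U) = ⋃_{x ∈ U} ∂^c f(x)`. -/
def CSuperdiffImg {d : ℕ} (h : Euc d → ℝ) (f : Euc d → EReal) (U : Set (Euc d)) :
    Set (Euc d) :=
  ⋃ x ∈ U, CSuperdiffAt h f x

/-- `dom(f) = {x : f(x) > -∞}`. -/
def edom {d : ℕ} (f : Euc d → EReal) : Set (Euc d) := {x | f x ≠ ⊥}

/-- A sequence of sets escapes to the horizon if it eventually avoids every ball
`B_R(0)`. -/
def EscapesToHorizon {α : Type*} [Norm α] (A : ℕ → Set α) : Prop :=
  ∀ R : ℝ, 0 < R → ∃ N : ℕ, ∀ n, N ≤ n → ∀ a ∈ A n, R ≤ ‖a‖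

/-- No subsequence of the sequence of sets escapes to the horizon. -/
def NoSubseqEscapes {α : Type*} [Norm α] (A : ℕ → Set α) : Prop :=
  ∀ φ : ℕ → ℕ, StrictMono φ → ¬ EscapesToHorizon fun k => A (φ k)

/-- A Kantorovich potential for `(Q, P')`: a `c`-concave function `f` whose `c`-superdifferential
is `Q`-a.e. a singleton `{T x}` and whose (a.e. defined) selection `T` pushes `Q` forward
to `P'`. -/
def IsKantorovichPotential {d : ℕ} (h : Euc d → ℝ) (Q P' : Measure (Euc d))
    (f : Euc d → EReal) : Prop :=
  IsCConcave h f ∧ ∃ T : Euc d → Euc d,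
    (∀ᵐ x ∂Q, CSuperdiffAt h f x = {T x}) ∧ Measure.map T Q = P'

/-- The Tukey depth `TD(u;Q) = inf_{v ∈ S^{d-1}} Q {x : ⟨v, x-u⟩ ≤ 0}`. -/
def tukeyDepth {d : ℕ} (Q : Measure (Euc d)) (u : Euc d) : ℝ≥0∞ :=
  ⨅ v ∈ {v : Euc d | ‖v‖ = 1}, Q {x | ⟪v, x - u⟫ ≤ 0}

/-- The set `S_ε(u)` of possible values at `u` of `c`-superdifferentials of Kantorovich
potentials from `Q` to an `ε`-contamination of `P`. -/
def contamSet {d : ℕ} (h : Euc d → ℝ) (Q P : Measure (Euc d)) (ε : ℝ) (u : Euc d) :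
    Set (Euc d) :=
  {y | ∃ μ : Measure (Euc d), IsProbabilityMeasure μ ∧ ∃ f : Euc d → EReal,
    IsKantorovichPotential h Q (ENNReal.ofReal (1 - ε) • P + ENNReal.ofReal ε • μ) f ∧
    y ∈ CSuperdiffAt h f u}

/-- Breakdown point `BP(u) = inf {ε ∈ (0,1) : S_ε(u) is unbounded}`. -/
def breakdownPoint {d : ℕ} (h : Euc d → ℝ) (Q P : Measure (Euc d)) (u : Euc d) : ℝ≥0∞ :=
  ⨅ ε ∈ {ε : ℝ | 0 < ε ∧ ε < 1 ∧ ¬ IsBounded (contamSet h Q P ε u)}, ENNReal.ofReal ε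

/-- `σ` is an optimal assignment for source points `u` and target points `x`. -/
def IsOptAssign {d n : ℕ} (h : Euc d → ℝ) (u x : Fin n → Euc d)
    (σ : Equiv.Perm (Fin n)) : Prop :=
  ∀ τ : Equiv.Perm (Fin n), ∑ i, cost h (u i) (x (σ i)) ≤ ∑ i, cost h (u i) (x (τ i))

/-- The dataset `x'` shares at least `k` atoms (with multiplicity) with the dataset `x`
of distinct points. -/
def SharesAtoms {d n : ℕ} (x x' : Fin n → Euc d) (k : ℕ) : Prop :=
  ∃ s : Finset (Fin n), k ≤ s.card ∧ ∃ g : Fin n → Fin n,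
    Set.InjOn g ↑s ∧ ∀ i ∈ s, x' (g i) = x i

/-- The set of values `x'_{σ(j)}` over datasets `x'` sharing at least `n - ℓ` atoms with `x`
and optimal assignments `σ` for `(u, x')`. -/
def fsBadSet {d n : ℕ} (h : Euc d → ℝ) (u x : Fin n → Euc d) (j : Fin n) (ℓ : ℕ) :
    Set (Euc d) :=
  {y | ∃ (x' : Fin n → Euc d) (σ : Equiv.Perm (Fin n)),
    SharesAtoms x x' (n - ℓ) ∧ IsOptAssign h u x' σ ∧ y = x' (σ j)}

/-- Finite sample (replacement) breakdown point of `T_{Q_n → P_n}(u_j)`. -/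
def finiteSampleBP {d n : ℕ} (h : Euc d → ℝ) (u x : Fin n → Euc d) (j : Fin n) : ℝ :=
  ((sInf {ℓ : ℕ | 1 ≤ ℓ ∧ ℓ ≤ n ∧ ¬ IsBounded (fsBadSet h u x j ℓ)} : ℕ) : ℝ) / n

/-- Tukey depth of `a` with respect to the empirical measure of `u_1, …, u_n`. -/
def empTD {d n : ℕ} (u : Fin n → Euc d) (a : Euc d) : ℝ :=
  ⨅ v : {v : Euc d // ‖v‖ = 1},
    ((Finset.univ.filter fun i => ⟪(v : Euc d), u i - a⟫ ≤ 0).card : ℝ) / n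

/-- Lower Tukey depth of `a` with respect to the empirical measure of `u_1, …, u_n`. -/
def empTDlt {d n : ℕ} (u : Fin n → Euc d) (a : Euc d) : ℝ :=
  ⨅ v : {v : Euc d // ‖v‖ = 1},
    ((Finset.univ.filter fun i => ⟪(v : Euc d), u i - a⟫ < 0).card : ℝ) / n

/-- Points in general position: every subset of cardinality at most `d+1` is affinely
independent. -/
def InGeneralPosition {d n : ℕ} (u : Fin n → Euc d) : Prop :=
  ∀ s : Finset (Fin n), s.card ≤ d + 1 → AffineIndependent ℝ fun i : s => u (i : Fin n)

/-- Convex conjugate `h*(y) = sup_x (⟨x,y⟩ - h(x))`. -/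
def convConj {d : ℕ} (h : Euc d → ℝ) (y : Euc d) : ℝ := ⨆ x : Euc d, (⟪x, y⟫ - h x)

/-- Topological support of a measure. -/
def measSupport {d : ℕ} (Q : Measure (Euc d)) : Set (Euc d) :=
  {x | ∀ U : Set (Euc d), IsOpen U → x ∈ U → 0 < Q U}

/-- A set `Γ ⊂ ℝ^d × ℝ^d` is `c`-cyclically monotone. -/
def CCyclMono {d : ℕ} (h : Euc d → ℝ) (Γ : Set (Euc d × Euc d)) : Prop :=
  ∀ (N : ℕ) (p : Fin N → Euc d × Euc d), (∀ i, p i ∈ Γ) →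
    ∀ τ : Equiv.Perm (Fin N),
      ∑ i, cost h (p i).1 (p i).2 ≤ ∑ i, cost h (p i).1 (p (τ i)).2

/-! ### Auxiliary lemmas -/

section Aux

variable {d n : ℕ}

lemma exists_unit_vector (hd : 1 ≤ d) : ∃ v : Euc d, ‖v‖ = 1 :=
  ⟨EuclideanSpace.single (⟨0, hd⟩ : Fin d) (1 : ℝ), by
    rw [EuclideanSpace.norm_single]; norm_num⟩

lemma exists_min_nat {α : Type*} [Nonempty α] (F : α → ℕ) : ∃ a, ∀ b, F a ≤ F b := by
  obtain ⟨a, ha⟩ : ∃ a, F a = sInf (Set.range F) := Nat.sInf_mem (Set.range_nonempty F)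
  exact ⟨a, fun b => ha ▸ Nat.sInf_le ⟨b, rfl⟩⟩

lemma iInf_count_div {α : Type*} [Nonempty α] (F : α → ℕ) (a₀ : α)
    (hmin : ∀ b, F a₀ ≤ F b) (hn : 0 < n) :
    ⨅ b : α, (F b : ℝ) / n = (F a₀ : ℝ) / n := by
  have hnR : (0:ℝ) < n := by exact_mod_cast hn
  apply le_antisymm
  · exact ciInf_le ⟨0, by rintro y ⟨b, rfl⟩; positivity⟩ a₀
  · refine le_ciInf fun b => ?_
    have : ((F a₀ : ℕ) : ℝ) ≤ ((F b : ℕ) : ℝ) := by exact_mod_cast hmin b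
    exact div_le_div_of_nonneg_right this hnR.le |>.trans_eq rfl

lemma sum_swap_split (f : Fin n → Fin n → ℝ) {a b : Fin n} (hab : a ≠ b) :
    ∑ m, f m (Equiv.swap a b m) = ∑ m, f m m - f a a - f b b + f a b + f b a := by
  have key : ∑ m, (f m (Equiv.swap a b m) - f m m)
      = ∑ m ∈ ({a, b} : Finset (Fin n)), (f m (Equiv.swap a b m) - f m m) := by
    refine (Finset.sum_subset (Finset.subset_univ _) ?_).symm
    intro m _ hm
    simp only [Finset.mem_insert, Finset.mem_singleton] at hm
    push_neg at hm
    rw [Equiv.swap_apply_of_ne_of_ne hm.1 hm.2]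
    ring
  rw [Finset.sum_pair hab, Equiv.swap_apply_left, Equiv.swap_apply_right] at key
  have expand : ∑ m, (f m (Equiv.swap a b m) - f m m)
      = ∑ m, f m (Equiv.swap a b m) - ∑ m, f m m := Finset.sum_sub_distrib _ _
  rw [expand] at key
  linarith

lemma isOptAssign_pair {h : Euc d → ℝ} {u x' : Fin n → Euc d} {σ : Equiv.Perm (Fin n)}
    (hopt : IsOptAssign h u x' σ) {a b : Fin n} (hab : a ≠ b) :
    cost h (u a) (x' (σ a)) + cost h (u b) (x' (σ b)) ≤
      cost h (u a) (x' (σ b)) + cost h (u b) (x' (σ a)) := by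
  have hτ := hopt ((Equiv.swap a b).trans σ)
  simp only [Equiv.trans_apply] at hτ
  have hsplit := sum_swap_split (fun m k => cost h (u m) (x' (σ k))) hab
  rw [hsplit] at hτ
  linarith

lemma exists_optAssign (h : Euc d → ℝ) (u x' : Fin n → Euc d) :
    ∃ σ : Equiv.Perm (Fin n), IsOptAssign h u x' σ := by
  obtain ⟨σ, -, hσ⟩ := Finset.exists_min_image Finset.univ
    (fun σ : Equiv.Perm (Fin n) => ∑ i, cost h (u i) (x' (σ i))) ⟨1, Finset.mem_univ _⟩
  exact ⟨σ, fun τ => hσ τ (Finset.mem_univ _)⟩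

lemma continuous_of_H1 {h : Euc d → ℝ} (h1 : H1 h) : Continuous h := by
  have := (h1.convexOn).continuousOn isOpen_univ
  rw [← continuousOn_univ]; exact this

lemma exists_argmin {h : Euc d → ℝ} (h1 : H1 h) (h3 : H3 h) (hpos : ∀ y, 0 ≤ h y)
    (w : Euc d) : ∃ q : Euc d, ∀ y : Euc d, h q - ⟪w, q⟫ ≤ h y - ⟪w, y⟫ := by
  obtain ⟨R, hR⟩ := h3 (‖w‖ + 1)
  set g : Euc d → ℝ := fun y => h y - ⟪w, y⟫ with hg
  have hgc : Continuous g := (continuous_of_H1 h1).sub (continuous_const.inner continuous_id)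
  set R' : ℝ := max R (h 0 + 1) with hR'
  have hR'0 : (0:ℝ) ≤ R' := le_trans (by linarith [hpos 0]) (le_max_right _ _)
  obtain ⟨q, hqmem, hq⟩ := (isCompact_closedBall (0 : Euc d) R').exists_isMinOn
    ⟨0, by simpa [Metric.mem_closedBall] using hR'0⟩ hgc.continuousOn
  have hg0 : g 0 = h 0 := by simp [hg]
  refine ⟨q, fun y => ?_⟩
  by_cases hy : y ∈ Metric.closedBall (0 : Euc d) R'
  · exact isMinOn_iff.mp hq y hy
  · have hq0 : g q ≤ g 0 := isMinOn_iff.mp hq 0 (by simpa [Metric.mem_closedBall] using hR'0)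
    have hnorm : R' ≤ ‖y‖ := by
      have := Metric.mem_closedBall.not.mp hy
      rw [dist_zero_right] at this
      linarith [not_le.mp this]
    have h1y : (‖w‖ + 1) * ‖y‖ ≤ h y := hR y (le_trans (le_max_left _ _) hnorm)
    have h2y : ⟪w, y⟫ ≤ ‖w‖ * ‖y‖ := real_inner_le_norm w y
    have hy1 : ‖y‖ ≤ g y := by
      simp only [hg]
      nlinarith [norm_nonneg y]
    have hy2 : h 0 + 1 ≤ g y := le_trans (le_trans (le_max_right _ _) hnorm) hy1
    have e1 : g q = h q - ⟪w, q⟫ := rfl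
    have e2 : g y = h y - ⟪w, y⟫ := rfl
    linarith

end Aux
section Construct

variable {d n : ℕ}

lemma construct_unbounded (h : Euc d → ℝ) (u x : Fin n → Euc d) (j : Fin n)
    (h1 : H1 h) (h3 : H3 h) (hpos : ∀ y, 0 ≤ h y)
    (v₁ : Euc d) (hv₁ : ‖v₁‖ = 1) (S : Finset (Fin n)) (hjS : j ∈ S)
    (hSpos : ∀ i, i ∉ S → 0 < ⟪v₁, u i - u j⟫) :
    ¬ IsBounded (fsBadSet h u x j S.card) := by
  intro hb
  rw [isBounded_iff_forall_norm_le] at hb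
  obtain ⟨C, hC⟩ := hb
  -- constants
  set C₁ : ℝ := (Finset.univ ×ˢ Finset.univ : Finset (Fin n × Fin n)).sup'
      ⟨(j, j), by simp⟩ (fun ab => h (u ab.1 - x ab.2)) with hC₁
  set K : ℝ := C + ‖u j‖ with hK
  set T₁ : ℝ := h ((K + 1) • v₁) with hT₁
  set T₂ : ℝ := if hne : (Sᶜ : Finset (Fin n)).Nonempty
      then (C₁ + 1) / (Sᶜ.inf' hne fun i => ⟪v₁, u i - u j⟫) else 0 with hT₂
  set t : ℝ := max T₁ T₂ + 1 with ht
  have ht1 : T₁ < t := lt_of_le_of_lt (le_max_left _ _) (by rw [ht]; linarith)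
  have ht2 : T₂ < t := lt_of_le_of_lt (le_max_right _ _) (by rw [ht]; linarith)
  have ht0 : 0 < t := lt_of_le_of_lt (hpos _) ht1
  -- the key beat property
  have hbeat : ∀ i, i ∉ S → C₁ < t * ⟪v₁, u i - u j⟫ := by
    intro i hi
    have hic : i ∈ (Sᶜ : Finset (Fin n)) := Finset.mem_compl.mpr hi
    have hne : (Sᶜ : Finset (Fin n)).Nonempty := ⟨i, hic⟩
    have hb0 : 0 < Sᶜ.inf' hne (fun i => ⟪v₁, u i - u j⟫) :=
      (Finset.lt_inf'_iff hne).mpr fun i hi => hSpos i (Finset.mem_compl.mp hi)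
    set b : ℝ := Sᶜ.inf' hne (fun i => ⟪v₁, u i - u j⟫) with hbdef
    have hbi : b ≤ ⟪v₁, u i - u j⟫ := Finset.inf'_le _ hic
    have hT2b : T₂ = (C₁ + 1) / b := by rw [hT₂, dif_pos hne]
    have htb : C₁ + 1 < t * b := by
      rw [hT2b] at ht2
      exact (div_lt_iff₀ hb0).mp ht2
    nlinarith
  -- the argmin point
  obtain ⟨q, hq⟩ := exists_argmin h1 h3 hpos (t • v₁)
  -- q is far
  have hqfar : K < ‖q‖ := by
    by_contra hqK
    push_neg at hqK
    have hmin := hq ((K + 1) • v₁)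
    have e1 : ⟪t • v₁, (K + 1) • v₁⟫ = t * (K + 1) := by
      rw [real_inner_smul_left, real_inner_smul_right, real_inner_self_eq_norm_sq, hv₁]
      ring
    have e2 : ⟪t • v₁, q⟫ = t * ⟪v₁, q⟫ := real_inner_smul_left _ _ _
    have e3 : ⟪v₁, q⟫ ≤ ‖q‖ := by
      have := real_inner_le_norm v₁ q
      rwa [hv₁, one_mul] at this
    rw [e1, e2] at hmin
    have h0q : 0 ≤ h q := hpos q
    nlinarith
  -- the contaminated dataset
  set Y : Euc d := u j - q with hY
  have hYfar : C < ‖Y‖ := by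
    have : ‖q‖ - ‖u j‖ ≤ ‖u j - q‖ := by
      rw [norm_sub_rev]
      exact norm_sub_norm_le _ _
    rw [hY]; rw [hK] at hqfar; linarith
  set x' : Fin n → Euc d := fun i => if i ∈ S then Y else x i with hx'
  obtain ⟨σ, hσ⟩ := exists_optAssign h u x'
  -- the assignment sends j to the far point
  have hfar : x' (σ j) = Y := by
    by_cases hσj : σ j ∈ S
    · simp [hx', hσj]
    -- otherwise derive a contradiction by a swap
    exfalso
    set A : Finset (Fin n) := S.map σ.symm.toEmbedding with hA
    have hjA : j ∉ A := by
      rw [hA, Finset.mem_map_equiv]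
      simpa using hσj
    have hcard : A.card = S.card := Finset.card_map _
    have hnotsub : ¬ A ⊆ S := by
      intro hsub
      have : A = S := Finset.eq_of_subset_of_card_le hsub (le_of_eq hcard.symm)
      exact hjA (this ▸ hjS)
    obtain ⟨i₁, hi₁A, hi₁S⟩ := Finset.not_subset.mp hnotsub
    have hσi₁ : σ i₁ ∈ S := by
      rw [hA, Finset.mem_map_equiv] at hi₁A
      simpa using hi₁A
    have hi₁j : i₁ ≠ j := fun e => hi₁S (e ▸ hjS)
    -- swap inequality
    have hpair := isOptAssign_pair hσ hi₁j
    have ex1 : x' (σ i₁) = Y := by simp [hx', hσi₁]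
    have ex2 : x' (σ j) = x (σ j) := by simp [hx', hσj]
    rw [ex1, ex2] at hpair
    simp only [cost] at hpair
    -- rewrite the far costs
    have e4 : u i₁ - Y = (u i₁ - u j) + q := by rw [hY]; abel
    have e5 : u j - Y = q := by rw [hY]; abel
    rw [e4, e5] at hpair
    -- subgradient bound
    have hsub := hq ((u i₁ - u j) + q)
    have e6 : ⟪t • v₁, (u i₁ - u j) + q⟫ - ⟪t • v₁, q⟫ = t * ⟪v₁, u i₁ - u j⟫ := by
      rw [inner_add_right, real_inner_smul_left, real_inner_smul_left]
      ring
    have hlow : h q + t * ⟪v₁, u i₁ - u j⟫ ≤ h ((u i₁ - u j) + q) := by linarith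
    -- cost bounds
    have hub1 : h (u i₁ - x (σ j)) ≤ C₁ := by
      have := Finset.le_sup' (fun ab : Fin n × Fin n => h (u ab.1 - x ab.2))
        (show (i₁, σ j) ∈ Finset.univ ×ˢ Finset.univ by simp)
      exact this
    have hub2 : 0 ≤ h (u j - x (σ j)) := hpos _
    have hbt := hbeat i₁ hi₁S
    linarith
  -- conclude: Y is in the bad set but has large norm
  have hmem : Y ∈ fsBadSet h u x j S.card := by
    refine ⟨x', σ, ⟨Sᶜ, ?_, id, Function.injective_id.injOn, ?_⟩, hσ, hfar.symm⟩
    · rw [Finset.card_compl, Fintype.card_fin]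
    · intro i hi
      have : i ∉ S := Finset.mem_compl.mp hi
      simp [hx', this]
  exact absurd (hC Y hmem) (not_le.mpr hYfar)

end Construct
section Extract

variable {d n : ℕ}

lemma extract_sequences (h : Euc d → ℝ) (u x : Fin n → Euc d) (j : Fin n)
    (hpos : ∀ y, 0 ≤ h y) (ℓ : ℕ) (hub : ¬ IsBounded (fsBadSet h u x j ℓ)) :
    ∃ C₀ : ℝ, 0 ≤ C₀ ∧ ∀ m : ℕ, ∃ (pp : Euc d) (P : Finset (Fin n)), (m : ℝ) ≤ ‖pp‖ ∧
      n - ℓ ≤ P.card ∧ j ∉ P ∧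
      ∀ i ∈ P, h pp - h ((u i - u j) + pp) ≤ C₀ := by
  set B₀ : ℝ := Finset.univ.sup' ⟨j, Finset.mem_univ j⟩ (fun i => ‖x i‖) with hB₀
  set C₁ : ℝ := (Finset.univ ×ˢ Finset.univ : Finset (Fin n × Fin n)).sup'
      ⟨(j, j), by simp⟩ (fun ab => h (u ab.1 - x ab.2)) with hC₁
  have hC₁0 : 0 ≤ C₁ := by
    refine le_trans (hpos (u j - x j)) ?_
    exact Finset.le_sup' (fun ab : Fin n × Fin n => h (u ab.1 - x ab.2))
      (show (j, j) ∈ Finset.univ ×ˢ Finset.univ by simp)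
  refine ⟨C₁, hC₁0, fun m => ?_⟩
  rw [isBounded_iff_forall_norm_le] at hub
  push_neg at hub
  obtain ⟨y, hy_mem, hy_norm⟩ := hub ((m : ℝ) + ‖u j‖ + B₀ + 1)
  obtain ⟨x', σ, ⟨s, hscard, g, hginj, hgx⟩, hopt, hy⟩ := hy_mem
  have hyB : B₀ < ‖y‖ := by
    have : (0:ℝ) ≤ (m : ℝ) := Nat.cast_nonneg m
    have := norm_nonneg (u j)
    linarith
  -- indices which are not j
  have hvalnej : ∀ i ∈ s, σ.symm (g i) ≠ j := by
    intro i hi hij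
    have : σ j = g i := by rw [← hij, Equiv.apply_symm_apply]
    have : y = x i := by rw [hy, this, hgx i hi]
    have hxB : ‖x i‖ ≤ B₀ := Finset.le_sup' (fun i => ‖x i‖) (Finset.mem_univ i)
    rw [this] at hyB
    linarith
  refine ⟨u j - y, Finset.image (fun i => σ.symm (g i)) s, ?_, ?_, ?_, ?_⟩
  · have h1 : ‖y‖ - ‖u j‖ ≤ ‖u j - y‖ := by
      rw [norm_sub_rev]
      exact norm_sub_norm_le _ _
    have : (0:ℝ) ≤ B₀ :=
      le_trans (norm_nonneg (x j)) (Finset.le_sup' (fun i => ‖x i‖) (Finset.mem_univ j))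
    linarith
  · have : (Finset.image (fun i => σ.symm (g i)) s).card = s.card := by
      apply Finset.card_image_of_injOn
      intro a ha b hb hab
      exact hginj ha hb (σ.symm.injective hab)
    omega
  · intro hjmem
    obtain ⟨i, hi, hij⟩ := Finset.mem_image.mp hjmem
    exact hvalnej i hi hij
  · intro i' hi'
    obtain ⟨i, hi, rfl⟩ := Finset.mem_image.mp hi'
    have hvx : x' (σ (σ.symm (g i))) = x i := by
      rw [Equiv.apply_symm_apply]
      exact hgx i hi
    have hpair := isOptAssign_pair hopt (hvalnej i hi)
    rw [hvx, ← hy] at hpair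
    simp only [cost] at hpair
    have e1 : u (σ.symm (g i)) - y = (u (σ.symm (g i)) - u j) + (u j - y) := by abel
    rw [e1] at hpair
    have hub1 : h (u j - x i) ≤ C₁ := by
      have := Finset.le_sup' (fun ab : Fin n × Fin n => h (u ab.1 - x ab.2))
        (show (j, i) ∈ Finset.univ ×ˢ Finset.univ by simp)
      exact this
    have hub2 : 0 ≤ h (u (σ.symm (g i)) - x i) := hpos _
    linarith

end Extract
section Core

variable {d : ℕ}

lemma core_false (h : Euc d → ℝ) (hpos : ∀ y, 0 ≤ h y) (h1 : H1 h) (h2 : H2 h)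
    (h3 : H3 h) {ι : Type*} [Fintype ι] [Nonempty ι] (δ : ι → Euc d) (C₀ : ℝ)
    (hC₀ : 0 ≤ C₀) (p : ℕ → Euc d) (P : ℕ → Finset ι)
    (hp : ∀ m : ℕ, (m : ℝ) ≤ ‖p m‖)
    (hD : ∀ m, ∀ i ∈ P m, h (p m) - h (δ i + p m) ≤ C₀)
    (hv : ∀ m, ∀ v : Euc d, ‖v‖ = 1 → ∃ i ∈ P m, ⟪v, δ i⟫ < 0) : False := by
  classical
  have hπ := Real.pi_pos
  set Dmax : ℝ := Finset.univ.sup' Finset.univ_nonempty (fun i : ι => ‖δ i‖) with hDdef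
  have hD0 : 0 ≤ Dmax := le_trans (norm_nonneg _)
    (Finset.le_sup' (fun i : ι => ‖δ i‖) (Finset.mem_univ (Classical.arbitrary ι)))
  have hδles : ∀ i : ι, ‖δ i‖ ≤ Dmax :=
    fun i => Finset.le_sup' (fun i : ι => ‖δ i‖) (Finset.mem_univ i)
  clear_value Dmax
  clear hDdef
  set r : ℝ := 2 * Dmax + 1 with hrdef
  have hr : 0 < r := by linarith
  clear_value r
  set θ : ℕ → ℝ := fun k => Real.pi - Real.pi / ((k : ℝ) + 2) with hθdef
  have hθmem : ∀ k : ℕ, θ k ∈ Set.Ioo 0 Real.pi := by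
    intro k
    have hk0 : (0:ℝ) ≤ (k:ℝ) := Nat.cast_nonneg k
    have hd2 : (0:ℝ) < (k:ℝ) + 2 := by linarith
    have hle : Real.pi / ((k:ℝ) + 2) ≤ Real.pi / 2 := by
      rw [div_le_div_iff₀ hd2 two_pos]
      nlinarith [mul_nonneg hπ.le hk0]
    have hgt : 0 < Real.pi / ((k:ℝ) + 2) := by positivity
    exact ⟨by simp only [hθdef]; linarith, by simp only [hθdef]; linarith⟩
  have hcos : ∀ k : ℕ, Real.cos (θ k / 2) = Real.sin (Real.pi / (2 * ((k:ℝ) + 2))) := by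
    intro k
    have hd2 : (0:ℝ) < (k:ℝ) + 2 := by positivity
    have e : θ k / 2 = Real.pi / 2 - Real.pi / (2 * ((k:ℝ) + 2)) := by
      simp only [hθdef]
      field_simp
    rw [e, Real.cos_pi_div_two_sub]
  have hcos0 : ∀ k : ℕ, 0 ≤ Real.cos (θ k / 2) := by
    intro k
    rw [hcos k]
    apply Real.sin_nonneg_of_nonneg_of_le_pi
    · positivity
    · have hd2 : (1:ℝ) ≤ 2 * ((k:ℝ) + 2) := by
        have := Nat.cast_nonneg (α := ℝ) k; linarith
      calc Real.pi / (2 * ((k:ℝ) + 2)) ≤ Real.pi / 1 := by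
            apply div_le_div_of_nonneg_left hπ.le one_pos hd2
        _ = Real.pi := by ring
  have hcosle : ∀ k : ℕ, Real.cos (θ k / 2) ≤ Real.pi / (2 * ((k:ℝ) + 2)) := by
    intro k
    rw [hcos k]
    exact Real.sin_le (by positivity)
  -- H2 data
  have hH2k : ∀ k : ℕ, ∃ M : ℝ, 0 < M ∧ ∀ pt : Euc d, M < ‖pt‖ →
      ∃ z : Euc d, z ≠ 0 ∧ ∀ y ∈ TruncCone r (θ k) z pt, h y ≤ h pt :=
    fun k => h2 r hr (θ k) (hθmem k)
  choose M hM0 hH2 using hH2k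
  set mk : ℕ → ℕ := fun k => ⌈M k⌉₊ + k + 1 with hmkdef
  have hmkcast : ∀ k : ℕ, ((mk k : ℕ) : ℝ) = ((⌈M k⌉₊ : ℕ) : ℝ) + (k : ℝ) + 1 := by
    intro k; simp only [hmkdef]; push_cast; ring
  have hpk1 : ∀ k : ℕ, M k < ‖p (mk k)‖ := by
    intro k
    have h1' := hp (mk k)
    have h2' : M k ≤ ((⌈M k⌉₊ : ℕ) : ℝ) := Nat.le_ceil _
    have h3' : (0:ℝ) ≤ (k : ℝ) := Nat.cast_nonneg k
    rw [hmkcast k] at h1'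
    linarith
  have hpk2 : ∀ k : ℕ, (k : ℝ) ≤ ‖p (mk k)‖ := by
    intro k
    have h1' := hp (mk k)
    have h2' : (0:ℝ) ≤ ((⌈M k⌉₊ : ℕ) : ℝ) := Nat.cast_nonneg _
    rw [hmkcast k] at h1'
    linarith
  choose z hz0 hcone using fun k => hH2 k (p (mk k)) (hpk1 k)
  have hznorm : ∀ k, ‖z k‖ ≠ 0 := fun k => norm_ne_zero_iff.mpr (hz0 k)
  set ζ : ℕ → Euc d := fun k => (‖z k‖)⁻¹ • z k with hζdef
  have hζs : ∀ k, ζ k ∈ Metric.sphere (0 : Euc d) 1 := by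
    intro k
    rw [mem_sphere_zero_iff_norm]
    simp only [hζdef]
    rw [norm_smul, norm_inv, norm_norm, inv_mul_cancel₀ (hznorm k)]
  obtain ⟨zs, hzs_mem, ψ, hψmono, hψtend⟩ :=
    (isCompact_sphere (0 : Euc d) 1).tendsto_subseq hζs
  have hzs1 : ‖zs‖ = 1 := mem_sphere_zero_iff_norm.mp hzs_mem
  have hvz : ∀ k : ℕ, ∃ i ∈ P (mk (ψ k)), ⟪-zs, δ i⟫ < 0 :=
    fun k => hv _ _ (by rw [norm_neg, hzs1])
  choose I hImem hIneg using hvz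
  obtain ⟨istar, hfibInf⟩ := Finite.exists_infinite_fiber I
  have hfib : (I ⁻¹' {istar} : Set ℕ).Infinite := Set.infinite_coe_iff.mp hfibInf
  obtain ⟨k₀, hk₀⟩ := hfib.nonempty
  have hk₀I : I k₀ = istar := hk₀
  have hcs : 0 < ⟪zs, δ istar⟫ := by
    have := hIneg k₀
    rw [hk₀I, inner_neg_left] at this
    linarith
  set cs : ℝ := ⟪zs, δ istar⟫ with hcsdef
  have hcsD : cs ≤ Dmax := by
    have := real_inner_le_norm zs (δ istar)
    rw [hzs1, one_mul] at this
    linarith [hδles istar]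
  -- eventualities
  have htend : Filter.Tendsto (fun k => ⟪ζ (ψ k), δ istar⟫) atTop (𝓝 cs) :=
    hψtend.inner tendsto_const_nhds
  clear_value cs
  set ε₁ : ℝ := cs / (8 * r) with hε₁def
  have hε₁ : 0 < ε₁ := by rw [hε₁def]; positivity
  have hε₁r : r * ε₁ = cs / 8 := by rw [hε₁def]; field_simp
  clear_value ε₁
  clear hε₁def
  obtain ⟨K₁, hK₁⟩ := eventually_atTop.mp
    (htend.eventually (eventually_ge_nhds (show cs / 2 < cs by linarith)))
  -- cos eventuality
  obtain ⟨K₂n, hK₂n⟩ := exists_nat_gt (Real.pi / (2 * ε₁))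
  have hK₂ : ∀ k : ℕ, K₂n ≤ k → Real.cos (θ (ψ k) / 2) ≤ ε₁ := by
    intro k hk
    have h1' : (K₂n : ℝ) ≤ (ψ k : ℝ) := by
      have : K₂n ≤ ψ k := le_trans hk (hψmono.le_apply)
      exact_mod_cast this
    have h2' : Real.pi / (2 * ε₁) < ((ψ k : ℝ) + 2) := by linarith
    have h3' : Real.pi / (2 * ((ψ k : ℝ) + 2)) ≤ ε₁ := by
      rw [div_le_iff₀ (by positivity)]
      rw [div_lt_iff₀ (by positivity)] at h2'
      linarith only [h2']
    exact le_trans (hcosle (ψ k)) h3'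
  -- H3 requirement
  set Creq : ℝ := h 0 + (8 / cs) * (C₀ + 1) + 1 with hCreqdef
  have hcsCreq : cs * (Creq - h 0) = 8 * (C₀ + 1) + cs := by
    rw [hCreqdef]; field_simp; ring
  have hCreqh0 : h 0 + 1 ≤ Creq := by
    rw [hCreqdef]
    have h8 : 0 < 8 / cs := by positivity
    linarith only [mul_nonneg h8.le (show (0:ℝ) ≤ C₀ + 1 by linarith)]
  clear_value Creq
  clear hCreqdef
  obtain ⟨R₃, hR₃⟩ := h3 Creq
  obtain ⟨K₃n, hK₃n⟩ := exists_nat_gt (max R₃ (4 * (Dmax + 1)))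
  have hK₃ : ∀ k : ℕ, K₃n ≤ k →
      R₃ ≤ ‖p (mk (ψ k))‖ ∧ 4 * (Dmax + 1) ≤ ‖p (mk (ψ k))‖ ∧ (1:ℝ) ≤ ‖p (mk (ψ k))‖ := by
    intro k hk
    have h1' : (K₃n : ℝ) ≤ (ψ k : ℝ) := by
      have : K₃n ≤ ψ k := le_trans hk (hψmono.le_apply)
      exact_mod_cast this
    have h2' := hpk2 (ψ k)
    refine ⟨?_, ?_, ?_⟩
    · have := le_max_left R₃ (4 * (Dmax + 1)); linarith
    · have := le_max_right R₃ (4 * (Dmax + 1)); linarith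
    · have := le_max_right R₃ (4 * (Dmax + 1)); linarith
  -- pick a large index in the fiber
  obtain ⟨kk, hkkmem⟩ := (hfib.diff (Set.finite_Iic (max K₁ (max K₂n K₃n)))).nonempty
  have hkkfib : I kk = istar := hkkmem.1
  have hkkgt : max K₁ (max K₂n K₃n) < kk := by
    have := hkkmem.2
    simpa [Set.mem_Iic, not_le] using this
  have hkk1 : K₁ ≤ kk := le_of_lt (lt_of_le_of_lt (le_max_left _ _) hkkgt)
  have hkk2 : K₂n ≤ kk :=
    le_of_lt (lt_of_le_of_lt (le_trans (le_max_left _ _) (le_max_right _ _)) hkkgt)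
  have hkk3 : K₃n ≤ kk :=
    le_of_lt (lt_of_le_of_lt (le_trans (le_max_right _ _) (le_max_right _ _)) hkkgt)
  -- instantiate at kk
  have himem : istar ∈ P (mk (ψ kk)) := by rw [← hkkfib]; exact hImem kk
  have hDk : h (p (mk (ψ kk))) - h (δ istar + p (mk (ψ kk))) ≤ C₀ := hD (mk (ψ kk)) istar himem
  have hc12 : cs / 2 ≤ ⟪ζ (ψ kk), δ istar⟫ := hK₁ kk hkk1
  have hcosk : Real.cos (θ (ψ kk) / 2) ≤ ε₁ := hK₂ kk hkk2
  obtain ⟨hnpR, hnpD, hnp1⟩ := hK₃ kk hkk3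
  have hH3p : Creq * ‖p (mk (ψ kk))‖ ≤ h (p (mk (ψ kk))) := hR₃ _ hnpR
  have hconek : ∀ y ∈ TruncCone r (θ (ψ kk)) (z (ψ kk)) (p (mk (ψ kk))),
      h y ≤ h (p (mk (ψ kk))) := hcone (ψ kk)
  have hζ1 : ‖ζ (ψ kk)‖ = 1 := mem_sphere_zero_iff_norm.mp (hζs (ψ kk))
  have hzeqsm : z (ψ kk) = ‖z (ψ kk)‖ • ζ (ψ kk) := by
    simp only [hζdef]
    rw [smul_smul, mul_inv_cancel₀ (hznorm (ψ kk)), one_smul]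
  have hzn0 : (0:ℝ) < ‖z (ψ kk)‖ :=
    lt_of_le_of_ne (norm_nonneg _) (Ne.symm (hznorm (ψ kk)))
  -- make everything opaque
  set zz : Euc d := z (ψ kk) with hzzdef
  set ζζ : Euc d := ζ (ψ kk) with hζζdef
  set θθ : ℝ := θ (ψ kk) with hθθdef
  set pp : Euc d := p (mk (ψ kk)) with hppdef
  clear_value zz ζζ θθ pp
  set npn : ℝ := ‖pp‖ with hnpdef
  clear_value npn
  set c : ℝ := ⟪ζζ, δ istar⟫ with hcdef
  have hc0 : 0 < c := lt_of_lt_of_le (by linarith only [hcs]) hc12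
  have hcD : c ≤ Dmax := by
    have := real_inner_le_norm ζζ (δ istar)
    rw [hζ1, one_mul] at this
    linarith only [this, hδles istar]
  have hnp0 : (0:ℝ) < npn := by linarith only [hnp1]
  set μ : ℝ := c / (2 * npn) with hμdef
  have hnp20 : (0:ℝ) < 2 * npn := by linarith only [hnp0]
  have hμ0 : 0 < μ := by rw [hμdef]; exact div_pos hc0 hnp20
  have hμnp : μ * (2 * npn) = c := by
    rw [hμdef]; exact div_mul_cancel₀ c (ne_of_gt hnp20)
  clear_value μ
  clear hμdef
  have hμ1 : μ ≤ 1 := by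
    by_contra hcon
    push_neg at hcon
    have := mul_lt_mul_of_pos_right hcon hnp20
    rw [one_mul] at this
    linarith only [this, hnpD, hcD, hD0, hμnp]
  set Q : Euc d := (1 + μ) • (pp + δ istar) with hQdef
  have hQsub : Q - pp = δ istar + μ • (pp + δ istar) := by
    rw [hQdef, add_smul, one_smul]; abel
  set A : ℝ := ⟪ζζ, pp + δ istar⟫ with hAdef
  have hQinner : ⟪ζζ, Q - pp⟫ = c + μ * A := by
    rw [hQsub, inner_add_right, real_inner_smul_right, hAdef, hcdef]
  have hAabs : |A| ≤ npn + Dmax := by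
    have h1' := abs_real_inner_le_norm ζζ (pp + δ istar)
    rw [hζ1, one_mul] at h1'
    have h2' : ‖pp + δ istar‖ ≤ npn + Dmax :=
      le_trans (norm_add_le _ _) (by rw [hnpdef]; linarith only [hδles istar])
    rw [hAdef]
    linarith only [h1', h2']
  have hAub : A ≤ npn + Dmax := le_trans (le_abs_self _) hAabs
  have hAlb : -(npn + Dmax) ≤ A := neg_le_of_neg_le (le_trans (neg_le_abs _) hAabs)
  clear_value A
  clear hAdef
  have hμD : μ * Dmax ≤ c / 8 := by
    have t1 := mul_le_mul_of_nonneg_left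
      (show 8 * Dmax ≤ 2 * npn - 8 by linarith only [hnpD]) hμ0.le
    linarith only [t1, hμnp, hμ0.le]
  have hμhalf : μ * (npn + Dmax) ≤ (5/8) * c := by linarith only [hμnp, hμD]
  have hμAub : μ * A ≤ (5/8) * c :=
    le_trans (mul_le_mul_of_nonneg_left hAub hμ0.le) hμhalf
  have hμAlb : -((5/8) * c) ≤ μ * A := by
    have := mul_le_mul_of_nonneg_left hAlb hμ0.le
    have h2' : μ * (-(npn + Dmax)) = -(μ * (npn + Dmax)) := by ring
    rw [h2'] at this
    linarith only [this, hμhalf]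
  -- norm of Q - pp
  have hQnorm : ‖Q - pp‖ ≤ 2 * Dmax := by
    rw [hQsub]
    have h1' : ‖δ istar + μ • (pp + δ istar)‖ ≤ ‖δ istar‖ + μ * ‖pp + δ istar‖ := by
      have := norm_add_le (δ istar) (μ • (pp + δ istar))
      rw [norm_smul, Real.norm_eq_abs, abs_of_pos hμ0] at this
      exact this
    have h2' : ‖pp + δ istar‖ ≤ npn + Dmax :=
      le_trans (norm_add_le _ _) (by rw [hnpdef]; linarith only [hδles istar])
    have h3' : μ * ‖pp + δ istar‖ ≤ (5/8) * c := by
      have := mul_le_mul_of_nonneg_left h2' hμ0.le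
      linarith only [this, hμhalf]
    have h4' := hδles istar
    linarith only [h1', h3', h4', hcD, hc0.le]
  -- cone membership
  have hQmem : Q ∈ TruncCone r θθ zz pp := by
    have hinnz : ⟪zz, Q - pp⟫ = ‖zz‖ * (c + μ * A) := by
      nth_rewrite 1 [hzeqsm]
      rw [real_inner_smul_left, hQinner]
    constructor
    · -- angular condition
      rw [hinnz]
      have hchain : ‖Q - pp‖ * Real.cos (θθ / 2) ≤ c + μ * A := by
        have h1' : ‖Q - pp‖ * Real.cos (θθ / 2) ≤ r * ε₁ := by
          apply mul_le_mul (by linarith only [hQnorm, hrdef, hD0]) hcosk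
            (by rw [hθθdef]; exact hcos0 (ψ kk)) hr.le
        have h3' : cs / 8 ≤ c + μ * A := by linarith only [hμAlb, hc12, hcs]
        linarith only [h1', hε₁r, h3']
      calc ‖Q - pp‖ * ‖zz‖ * Real.cos (θθ / 2)
          = ‖zz‖ * (‖Q - pp‖ * Real.cos (θθ / 2)) := by ring
        _ ≤ ‖zz‖ * (c + μ * A) := mul_le_mul_of_nonneg_left hchain hzn0.le
    · -- depth condition
      rw [hinnz]
      have : c + μ * A ≤ r := by linarith only [hμAub, hcD, hc0.le, hrdef]
      calc ‖zz‖ * (c + μ * A) ≤ ‖zz‖ * r := mul_le_mul_of_nonneg_left this hzn0.le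
        _ = r * ‖zz‖ := by ring
  have hQle : h Q ≤ h pp := hconek Q hQmem
  -- convexity step
  have h1μ : (0:ℝ) < 1 + μ := by linarith
  set a : ℝ := 1 / (1 + μ) with hadef
  set b : ℝ := μ / (1 + μ) with hbdef
  have ha : 0 ≤ a := by rw [hadef]; positivity
  have hb : 0 ≤ b := by rw [hbdef]; positivity
  have hab : a + b = 1 := by rw [hadef, hbdef]; field_simp
  have hbeq : b * (1 + μ) = μ := by rw [hbdef]; field_simp
  have hcomb : a • Q + b • (0 : Euc d) = pp + δ istar := by
    rw [hQdef, smul_smul, smul_zero, add_zero]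
    have e1 : a * (1 + μ) = 1 := by rw [hadef]; field_simp
    rw [e1, one_smul]
  clear_value a b
  have hconv := h1.convexOn.2 (Set.mem_univ Q) (Set.mem_univ (0 : Euc d)) ha hb hab
  rw [hcomb] at hconv
  simp only [smul_eq_mul] at hconv
  have hconv2 : h (pp + δ istar) ≤ a * h pp + b * h 0 := by
    have := mul_le_mul_of_nonneg_left hQle ha
    linarith only [this, hconv]
  -- final arithmetic
  have hcomm : δ istar + pp = pp + δ istar := add_comm _ _
  rw [hcomm] at hDk
  have hb2 : μ / 2 ≤ b := by
    have t1 : b * μ ≤ b * 1 := mul_le_mul_of_nonneg_left hμ1 hb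
    linarith only [hbeq, t1]
  have hstep1 : b * (h pp - h 0) ≤ h pp - h (pp + δ istar) := by
    have e2 : a = 1 - b := by linarith only [hab]
    rw [e2] at hconv2
    linarith only [hconv2]
  have hppd0 : 0 ≤ h pp - h 0 := by
    have h0p := hpos (0 : Euc d)
    have t1 : Creq * 1 ≤ Creq * npn :=
      mul_le_mul_of_nonneg_left hnp1 (by linarith only [hCreqh0, h0p])
    linarith only [hH3p, t1, hCreqh0]
  have hstep2 : (μ / 2) * (h pp - h 0) ≤ b * (h pp - h 0) :=
    mul_le_mul_of_nonneg_right hb2 hppd0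
  have hstep3 : (Creq - h 0) * npn ≤ h pp - h 0 := by
    have h0p := hpos (0 : Euc d)
    have t1 : h 0 * 1 ≤ h 0 * npn := mul_le_mul_of_nonneg_left hnp1 h0p
    linarith only [hH3p, t1]
  have hstep3b : (μ / 2) * ((Creq - h 0) * npn) ≤ (μ / 2) * (h pp - h 0) :=
    mul_le_mul_of_nonneg_left hstep3 (by linarith only [hμ0])
  have hstep4 : (μ / 2) * ((Creq - h 0) * npn) = (c / 4) * (Creq - h 0) := by
    linear_combination ((Creq - h 0) / 4) * hμnp
  have hstep5 : (cs / 8) * (Creq - h 0) ≤ (c / 4) * (Creq - h 0) := by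
    have hX : 0 ≤ Creq - h 0 := by linarith only [hCreqh0, hpos (0 : Euc d)]
    apply mul_le_mul_of_nonneg_right (by linarith only [hc12, hcs]) hX
  linarith only [hstep1, hstep2, hstep3b, hstep4, hstep5, hcsCreq, hDk, hcs]

end Core
section Part1

variable {d n : ℕ}

lemma part1_lower (h : Euc d → ℝ) (u x : Fin n → Euc d) (j : Fin n)
    (hpos : ∀ y, 0 ≤ h y) (h1 : H1 h) (h2 : H2 h) (h3 : H3 h)
    (v₀ : Euc d)
    (hmin : ∀ v : Euc d, ‖v‖ = 1 →
      (Finset.univ.filter fun i => ⟪v₀, u i - u j⟫ < 0).card ≤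
      (Finset.univ.filter fun i => ⟪v, u i - u j⟫ < 0).card)
    (ℓ : ℕ) (hub : ¬ IsBounded (fsBadSet h u x j ℓ)) :
    (Finset.univ.filter fun i => ⟪v₀, u i - u j⟫ < 0).card + 1 ≤ ℓ := by
  by_contra hcon
  push_neg at hcon
  have hk : ℓ ≤ (Finset.univ.filter fun i => ⟪v₀, u i - u j⟫ < 0).card := by omega
  obtain ⟨C₀, hC₀, hex⟩ := extract_sequences h u x j hpos ℓ hub
  choose pp P hP1 hP2 hP3 hP4 using hex
  have hnn : Nonempty (Fin n) := ⟨j⟩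
  refine core_false h hpos h1 h2 h3 (fun i => u i - u j) C₀ hC₀ pp P hP1 hP4 ?_
  intro m v hv1
  by_contra hno
  push_neg at hno
  have hdisj : Disjoint (Finset.univ.filter fun i => ⟪v, u i - u j⟫ < 0) (P m) := by
    rw [Finset.disjoint_left]
    intro i hi hiP
    have hge := hno i hiP
    rw [Finset.mem_filter] at hi
    linarith [hi.2]
  have hsub : (Finset.univ.filter fun i => ⟪v, u i - u j⟫ < 0) ∪ P m ⊆
      Finset.univ.erase j := by
    intro i hi
    rw [Finset.mem_union] at hi
    rw [Finset.mem_erase]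
    refine ⟨?_, Finset.mem_univ i⟩
    rcases hi with hi | hi
    · rw [Finset.mem_filter] at hi
      intro hij
      have h2' := hi.2
      rw [hij, sub_self, inner_zero_right] at h2'
      exact lt_irrefl 0 h2'
    · intro hij
      rw [hij] at hi
      exact hP3 m hi
  have hcard1 : (Finset.univ.filter fun i => ⟪v, u i - u j⟫ < 0).card + (P m).card ≤ n - 1 := by
    have hle := Finset.card_le_card hsub
    rw [Finset.card_union_of_disjoint hdisj] at hle
    rwa [Finset.card_erase_of_mem (Finset.mem_univ j), Finset.card_univ,
      Fintype.card_fin] at hle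
  have hminv := hmin v hv1
  have h2P := hP2 m
  have hn1 : 1 ≤ n := j.pos
  omega

end Part1
section GP

variable {d n : ℕ}

lemma gp_direction (hd : 1 ≤ d) (u : Fin n → Euc d) (j : Fin n)
    (hu : Function.Injective u) (gp : InGeneralPosition u) :
    ∃ v : Euc d, ‖v‖ = 1 ∧
      (∀ w : Euc d, ‖w‖ = 1 →
        (Finset.univ.filter fun i => ⟪v, u i - u j⟫ < 0).card ≤
        (Finset.univ.filter fun i => ⟪w, u i - u j⟫ < 0).card) ∧
      (∀ i, i ≠ j → ⟪v, u i - u j⟫ ≠ 0) := by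
  classical
  obtain ⟨v₁, hv₁⟩ := exists_unit_vector hd
  have hsph : Nonempty {v : Euc d // ‖v‖ = 1} := ⟨⟨v₁, hv₁⟩⟩
  obtain ⟨v₀s, hv₀min⟩ := exists_min_nat
    (fun v : {v : Euc d // ‖v‖ = 1} =>
      (Finset.univ.filter fun i => ⟪(v : Euc d), u i - u j⟫ < 0).card)
  obtain ⟨v₀, hv₀⟩ := v₀s
  have hmin : ∀ w : Euc d, ‖w‖ = 1 →
      (Finset.univ.filter fun i => ⟪v₀, u i - u j⟫ < 0).card ≤
      (Finset.univ.filter fun i => ⟪w, u i - u j⟫ < 0).card :=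
    fun w hw => hv₀min ⟨w, hw⟩
  set E : Finset (Fin n) :=
    Finset.univ.filter (fun i => i ≠ j ∧ ⟪v₀, u i - u j⟫ = 0) with hEdef
  by_cases hE : E = ∅
  · refine ⟨v₀, hv₀, hmin, ?_⟩
    intro i hij hzero
    have : i ∈ E := by
      rw [hEdef, Finset.mem_filter]
      exact ⟨Finset.mem_univ i, hij, hzero⟩
    rw [hE] at this
    exact absurd this (Finset.notMem_empty i)
  have hEne : E.Nonempty := Finset.nonempty_of_ne_empty hE
  have hEj : j ∉ E := by
    rw [hEdef, Finset.mem_filter]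
    rintro ⟨-, hjj, -⟩
    exact hjj rfl
  have hEzero : ∀ i ∈ E, ⟪v₀, u i - u j⟫ = 0 := by
    intro i hi
    rw [hEdef, Finset.mem_filter] at hi
    exact hi.2.2
  have hEnej : ∀ i ∈ E, i ≠ j := by
    intro i hi
    rw [hEdef, Finset.mem_filter] at hi
    exact hi.2.1
  have hv₀0 : v₀ ≠ 0 := by
    intro h0
    rw [h0, norm_zero] at hv₀
    norm_num at hv₀
  -- Step: |E| ≤ d
  have hEcard : E.card ≤ d := by
    by_contra hEd
    push_neg at hEd
    obtain ⟨E', hE'sub, hE'card⟩ := Finset.exists_subset_card_eq (Nat.succ_le_of_lt hEd)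
    have haff := gp E' (le_of_eq hE'card)
    have hcard' : Fintype.card E' = d + 1 := by rw [Fintype.card_coe, hE'card]
    have hfr := haff.finrank_vectorSpan hcard'
    have hle : vectorSpan ℝ (Set.range fun i : E' => u (i : Fin n)) ≤
        (Submodule.span ℝ {v₀})ᗮ := by
      rw [vectorSpan_def, Submodule.span_le]
      rintro w hw
      rw [Set.mem_vsub] at hw
      obtain ⟨w1, hw1, w2, hw2, rfl⟩ := hw
      obtain ⟨a, rfl⟩ := hw1
      obtain ⟨b, rfl⟩ := hw2
      have ha0 : ⟪v₀, u (a : Fin n) - u j⟫ = 0 := hEzero _ (hE'sub a.2)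
      have hb0 : ⟪v₀, u (b : Fin n) - u j⟫ = 0 := hEzero _ (hE'sub b.2)
      have hip : ⟪v₀, u (a : Fin n) -ᵥ u (b : Fin n)⟫ = 0 := by
        rw [vsub_eq_sub]
        have e : u (a : Fin n) - u (b : Fin n) =
            (u (a : Fin n) - u j) - (u (b : Fin n) - u j) := by abel
        rw [e, inner_sub_right, ha0, hb0, sub_zero]
      rw [SetLike.mem_coe, Submodule.mem_orthogonal]
      intro y hy
      obtain ⟨cc, rfl⟩ := Submodule.mem_span_singleton.mp hy
      rw [real_inner_smul_left, hip, mul_zero]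
    have hd1 : Module.finrank ℝ ((Submodule.span ℝ ({v₀} : Set (Euc d)))ᗮ) = d - 1 := by
      have hadd := Submodule.finrank_add_finrank_orthogonal
        (𝕜 := ℝ) (E := Euc d) (Submodule.span ℝ ({v₀} : Set (Euc d)))
      rw [finrank_span_singleton hv₀0, finrank_euclideanSpace_fin] at hadd
      omega
    have hmono := Submodule.finrank_mono hle
    rw [hfr, hd1] at hmono
    omega
  -- Step: linear independence of the differences over E
  set s₀ : Finset (Fin n) := insert j E with hs₀def
  have hs₀card : s₀.card ≤ d + 1 := by
    rw [hs₀def, Finset.card_insert_of_notMem hEj]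
    omega
  have haff₀ := gp s₀ hs₀card
  have hjs₀ : j ∈ s₀ := Finset.mem_insert_self j E
  have hlin := (affineIndependent_iff_linearIndependent_vsub ℝ
    (fun i : s₀ => u (i : Fin n)) ⟨j, hjs₀⟩).mp haff₀
  have hlinE : LinearIndependent ℝ (fun i : {i // i ∈ E} => u (i : Fin n) - u j) := by
    set e : {i // i ∈ E} → {y : {x // x ∈ s₀} // y ≠ ⟨j, hjs₀⟩} :=
      fun i => ⟨⟨(i : Fin n), Finset.mem_insert_of_mem i.2⟩, by
        intro hq
        have : (i : Fin n) = j := by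
          have := congrArg (fun y => (y : {x // x ∈ s₀})) hq
          exact congrArg Subtype.val this
        exact hEnej _ i.2 this⟩ with hedef
    have einj : Function.Injective e := by
      intro a b hab
      have h0' := congrArg Subtype.val hab
      have h1' := congrArg Subtype.val h0'
      exact Subtype.ext h1'
    have := hlin.comp e einj
    exact this
  -- Step: 0 is not in the convex hull of the differences
  set Δ : Finset (Euc d) := E.image (fun i => u i - u j) with hΔdef
  have hinj : ∀ a ∈ E, ∀ b ∈ E, u a - u j = u b - u j → a = b := by
    intro a _ b _ hab
    exact hu (sub_left_inj.mp hab)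
  have hΔ0 : (0 : Euc d) ∉ convexHull ℝ (Δ : Set (Euc d)) := by
    intro h0
    rw [Finset.convexHull_eq] at h0
    obtain ⟨w, hw0, hw1, hwc⟩ := h0
    rw [Finset.centerMass, hw1, inv_one, one_smul] at hwc
    simp only [id] at hwc
    have hsum : ∑ i ∈ E, w (u i - u j) • (u i - u j) = 0 := by
      rw [← Finset.sum_image (f := fun y => w y • y) hinj]
      exact hwc
    have hsum' : ∑ i : {i // i ∈ E}, w (u (i : Fin n) - u j) • (u (i : Fin n) - u j)
        = 0 := by
      rw [Finset.univ_eq_attach, Finset.sum_attach E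
        (fun i => w (u i - u j) • (u i - u j))]
      exact hsum
    have hall0 := linearIndependent_iff'.mp hlinE Finset.univ
      (fun i => w (u (i : Fin n) - u j)) hsum'
    have hzero : ∀ yy ∈ Δ, w yy = 0 := by
      intro yy hyy
      rw [hΔdef, Finset.mem_image] at hyy
      obtain ⟨i, hi, rfl⟩ := hyy
      exact hall0 ⟨i, hi⟩ (Finset.mem_univ _)
    rw [Finset.sum_congr rfl (fun yy hyy => hzero yy hyy)] at hw1
    simp at hw1
  have hclosed : IsClosed (convexHull ℝ (Δ : Set (Euc d))) :=
    (Δ.finite_toSet).isClosed_convexHull ℝ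
  obtain ⟨f, u₀, hfa, hf0⟩ := geometric_hahn_banach_closed_point
    (convex_convexHull ℝ _) hclosed hΔ0
  have hf00 : f 0 = 0 := map_zero f
  have hu₀ : u₀ < 0 := by rw [← hf00]; exact hf0
  set wp : Euc d := -((InnerProductSpace.toDual ℝ (Euc d)).symm f) with hwpdef
  have hwE : ∀ i ∈ E, 0 < ⟪wp, u i - u j⟫ := by
    intro i hi
    have hmem : (u i - u j) ∈ convexHull ℝ (Δ : Set (Euc d)) := by
      apply subset_convexHull
      exact_mod_cast Finset.mem_image_of_mem (fun i => u i - u j) hi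
    have hfi : f (u i - u j) < u₀ := hfa _ hmem
    have heq : ⟪(InnerProductSpace.toDual ℝ (Euc d)).symm f, u i - u j⟫ = f (u i - u j) :=
      InnerProductSpace.toDual_symm_apply
    rw [hwpdef, inner_neg_left, heq]
    linarith
  -- perturbation
  set F : Finset (Fin n) := Finset.univ.filter (fun i => i ≠ j ∧ i ∉ E) with hFdef
  have hFne0 : ∀ i ∈ F, ⟪v₀, u i - u j⟫ ≠ 0 := by
    intro i hi hzero
    rw [hFdef, Finset.mem_filter] at hi
    exact hi.2.2 (by rw [hEdef, Finset.mem_filter]; exact ⟨Finset.mem_univ i, hi.2.1, hzero⟩)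
  set ε₀ : ℝ := if hF : F.Nonempty then F.inf' hF (fun i => |⟪v₀, u i - u j⟫|) else 1
    with hε₀def
  have hε₀ : 0 < ε₀ := by
    rw [hε₀def]
    split_ifs with hF
    · exact (Finset.lt_inf'_iff hF).mpr fun i hi => abs_pos.mpr (hFne0 i hi)
    · norm_num
  have hε₀le : ∀ i ∈ F, ε₀ ≤ |⟪v₀, u i - u j⟫| := by
    intro i hi
    rw [hε₀def, dif_pos ⟨i, hi⟩]
    exact Finset.inf'_le _ hi
  set W : ℝ := ‖wp‖ with hWdef
  have hW0 : 0 ≤ W := norm_nonneg _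
  set Dm : ℝ := Finset.univ.sup' ⟨j, Finset.mem_univ j⟩ (fun i => ‖u i - u j‖) with hDmdef
  have hDm0 : 0 ≤ Dm :=
    le_trans (norm_nonneg _) (Finset.le_sup' (fun i => ‖u i - u j‖) (Finset.mem_univ j))
  have hDmle : ∀ i, ‖u i - u j‖ ≤ Dm :=
    fun i => Finset.le_sup' (fun i => ‖u i - u j‖) (Finset.mem_univ i)
  set ε : ℝ := min (ε₀ / (W * Dm + 1)) (1 / (2 * (W + 1))) with hεdef
  have hε : 0 < ε := by
    rw [hεdef]
    apply lt_min
    · positivity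
    · positivity
  have hεWD : ε * (W * Dm) < ε₀ := by
    have h1' : ε ≤ ε₀ / (W * Dm + 1) := min_le_left _ _
    have h2' : (0:ℝ) < W * Dm + 1 := by positivity
    have h4' := mul_le_mul_of_nonneg_right h1' h2'.le
    have h5' : ε₀ / (W * Dm + 1) * (W * Dm + 1) = ε₀ := div_mul_cancel₀ _ (ne_of_gt h2')
    rw [h5'] at h4'
    nlinarith [hε]
  have hεW : ε * W ≤ 1 / 2 := by
    have h1' : ε ≤ 1 / (2 * (W + 1)) := min_le_right _ _
    have h2' : (0:ℝ) < 2 * (W + 1) := by positivity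
    have h4' := mul_le_mul_of_nonneg_right h1' h2'.le
    have h5' : 1 / (2 * (W + 1)) * (2 * (W + 1)) = 1 := by
      field_simp
    rw [h5'] at h4'
    nlinarith [hε, hW0]
  set v' : Euc d := v₀ + ε • wp with hv'def
  have hinner : ∀ i, ⟪v', u i - u j⟫ = ⟪v₀, u i - u j⟫ + ε * ⟪wp, u i - u j⟫ := by
    intro i
    rw [hv'def, inner_add_left, real_inner_smul_left]
  have hpert : ∀ i, |ε * ⟪wp, u i - u j⟫| < ε₀ := by
    intro i
    have h1' : |⟪wp, u i - u j⟫| ≤ W * ‖u i - u j‖ := by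
      have := abs_real_inner_le_norm wp (u i - u j)
      rw [← hWdef] at this
      exact this
    have h2' : W * ‖u i - u j‖ ≤ W * Dm := mul_le_mul_of_nonneg_left (hDmle i) hW0
    have h3' : |ε * ⟪wp, u i - u j⟫| = ε * |⟪wp, u i - u j⟫| := by
      rw [abs_mul, abs_of_pos hε]
    rw [h3']
    have h4' : ε * |⟪wp, u i - u j⟫| ≤ ε * (W * Dm) :=
      mul_le_mul_of_nonneg_left (le_trans h1' h2') hε.le
    linarith
  have hv'E : ∀ i ∈ E, 0 < ⟪v', u i - u j⟫ := by
    intro i hi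
    rw [hinner i, hEzero i hi, zero_add]
    exact mul_pos hε (hwE i hi)
  have hv'F : ∀ i ∈ F, (⟪v', u i - u j⟫ < 0 ↔ ⟪v₀, u i - u j⟫ < 0) ∧
      ⟪v', u i - u j⟫ ≠ 0 := by
    intro i hi
    have habs := hpert i
    have hlow := hε₀le i hi
    have habs2 : ε * ⟪wp, u i - u j⟫ ≤ |ε * ⟪wp, u i - u j⟫| := le_abs_self _
    have habs3 : -(ε * ⟪wp, u i - u j⟫) ≤ |ε * ⟪wp, u i - u j⟫| := neg_le_abs _
    rw [hinner i]
    rcases lt_or_gt_of_ne (hFne0 i hi) with hneg | hposi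
    · rw [abs_of_neg hneg] at hlow
      refine ⟨⟨fun _ => hneg, fun _ => by linarith⟩, fun hz => by linarith⟩
    · rw [abs_of_pos hposi] at hlow
      refine ⟨⟨fun hcon => by linarith, fun hcon => by linarith⟩, fun hz => by linarith⟩
  have hv'0 : v' ≠ 0 := by
    intro h0
    have h1' : ‖v₀‖ ≤ ‖v'‖ + ‖ε • wp‖ := by
      have e : v₀ = v' - ε • wp := by rw [hv'def]; abel
      rw [e]
      exact norm_sub_le _ _
    rw [h0, norm_zero, zero_add, norm_smul, Real.norm_eq_abs, abs_of_pos hε, hv₀,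
      ← hWdef] at h1'
    linarith
  set v : Euc d := ‖v'‖⁻¹ • v' with hvdef
  have hv'n : (0:ℝ) < ‖v'‖ := norm_pos_iff.mpr hv'0
  have hvnorm : ‖v‖ = 1 := by
    rw [hvdef, norm_smul, norm_inv, norm_norm, inv_mul_cancel₀ (ne_of_gt hv'n)]
  have hvinner : ∀ i, ⟪v, u i - u j⟫ = ‖v'‖⁻¹ * ⟪v', u i - u j⟫ := by
    intro i
    rw [hvdef, real_inner_smul_left]
  have hvsign : ∀ i, (⟪v, u i - u j⟫ < 0 ↔ ⟪v', u i - u j⟫ < 0) ∧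
      (⟪v, u i - u j⟫ = 0 ↔ ⟪v', u i - u j⟫ = 0) := by
    intro i
    rw [hvinner i]
    have hii : (0:ℝ) < ‖v'‖⁻¹ := inv_pos.mpr hv'n
    constructor
    · constructor
      · intro hcon
        by_contra hcon2
        push_neg at hcon2
        have := mul_nonneg hii.le hcon2
        linarith only [this, hcon]
      · intro hcon
        exact mul_neg_of_pos_of_neg hii hcon
    · constructor
      · intro hcon
        rcases mul_eq_zero.mp hcon with hcc | hcc
        · exact absurd hcc (ne_of_gt hii)
        · exact hcc
      · intro hcon; rw [hcon, mul_zero]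
  -- the filters agree
  have hfilter : (Finset.univ.filter fun i => ⟪v, u i - u j⟫ < 0) =
      (Finset.univ.filter fun i => ⟪v₀, u i - u j⟫ < 0) := by
    apply Finset.filter_congr
    intro i _
    rw [(hvsign i).1]
    by_cases hij : i = j
    · subst hij
      simp [sub_self]
    by_cases hiE : i ∈ E
    · constructor
      · intro hcon; linarith [hv'E i hiE]
      · intro hcon; linarith [hEzero i hiE]
    · have hiF : i ∈ F := by
        rw [hFdef, Finset.mem_filter]
        exact ⟨Finset.mem_univ i, hij, hiE⟩
      exact (hv'F i hiF).1
  refine ⟨v, hvnorm, ?_, ?_⟩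
  · intro w' hw'
    rw [hfilter]
    exact hmin w' hw'
  · intro i hij
    by_cases hiE : i ∈ E
    · intro hz
      rw [(hvsign i).2] at hz
      linarith [hv'E i hiE]
    · have hiF : i ∈ F := by
        rw [hFdef, Finset.mem_filter]
        exact ⟨Finset.mem_univ i, hij, hiE⟩
      intro hz
      rw [(hvsign i).2] at hz
      exact (hv'F i hiF).2 hz

end GP

/-- the finite sample breakdown point of `T_{Q_n→P_n}(u_j)` lies in
`[TD^-(u_j;Q_n) + 1/n, TD(u_j;Q_n)]`; under general position with `n ≥ d` it equals
`TD^-(u_j;Q_n) + 1/n`. -/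
theorem finiteSampleBP_mem_Icc (d n : ℕ) (hd : 1 ≤ d) (h : Euc d → ℝ)
    (hpos : ∀ x, 0 ≤ h x) (h1 : H1 h) (h2 : H2 h) (h3 : H3 h)
    (u x : Fin n → Euc d) (hu : Function.Injective u) (hx : Function.Injective x)
    (j : Fin n) :
    (empTDlt u (u j) + 1 / n ≤ finiteSampleBP h u x j ∧
      finiteSampleBP h u x j ≤ empTD u (u j)) ∧
    (InGeneralPosition u → d ≤ n →
      finiteSampleBP h u x j = empTDlt u (u j) + 1 / n) := by
  classical
  have hn : 0 < n := j.pos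
  have hnR : (0:ℝ) < n := by exact_mod_cast hn
  obtain ⟨v₁, hv₁⟩ := exists_unit_vector hd
  have hsph : Nonempty {v : Euc d // ‖v‖ = 1} := ⟨⟨v₁, hv₁⟩⟩
  obtain ⟨vlt, hvltmin⟩ := exists_min_nat
    (fun v : {v : Euc d // ‖v‖ = 1} =>
      (Finset.univ.filter fun i => ⟪(v : Euc d), u i - u j⟫ < 0).card)
  obtain ⟨vle, hvlemin⟩ := exists_min_nat
    (fun v : {v : Euc d // ‖v‖ = 1} =>
      (Finset.univ.filter fun i => ⟪(v : Euc d), u i - u j⟫ ≤ 0).card)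
  have hTDlt : empTDlt u (u j) =
      (((Finset.univ.filter fun i => ⟪(vlt : Euc d), u i - u j⟫ < 0).card : ℕ) : ℝ) / n :=
    iInf_count_div _ vlt hvltmin hn
  have hTDle : empTD u (u j) =
      (((Finset.univ.filter fun i => ⟪(vle : Euc d), u i - u j⟫ ≤ 0).card : ℕ) : ℝ) / n :=
    iInf_count_div _ vle hvlemin hn
  -- the "≤ 0" construction
  have hjSle : j ∈ Finset.univ.filter fun i => ⟪(vle : Euc d), u i - u j⟫ ≤ 0 := by
    rw [Finset.mem_filter, sub_self, inner_zero_right]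
    exact ⟨Finset.mem_univ j, le_refl 0⟩
  have hunb_le := construct_unbounded h u x j h1 h3 hpos (vle : Euc d) vle.2
    (Finset.univ.filter fun i => ⟪(vle : Euc d), u i - u j⟫ ≤ 0) hjSle
    (by
      intro i hi
      rw [Finset.mem_filter] at hi
      push_neg at hi
      exact hi (Finset.mem_univ i))
  have hkle_mem : (Finset.univ.filter fun i => ⟪(vle : Euc d), u i - u j⟫ ≤ 0).card ∈
      {ℓ : ℕ | 1 ≤ ℓ ∧ ℓ ≤ n ∧ ¬ IsBounded (fsBadSet h u x j ℓ)} := by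
    refine ⟨Finset.card_pos.mpr ⟨j, hjSle⟩, ?_, hunb_le⟩
    calc (Finset.univ.filter fun i => ⟪(vle : Euc d), u i - u j⟫ ≤ 0).card
        ≤ (Finset.univ : Finset (Fin n)).card := Finset.card_le_univ _
      _ = n := by rw [Finset.card_univ, Fintype.card_fin]
  have hSne : {ℓ : ℕ | 1 ≤ ℓ ∧ ℓ ≤ n ∧ ¬ IsBounded (fsBadSet h u x j ℓ)}.Nonempty :=
    ⟨_, hkle_mem⟩
  have hsInf_mem := Nat.sInf_mem hSne
  have hlow := part1_lower h u x j hpos h1 h2 h3 (vlt : Euc d)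
    (fun v hv => hvltmin ⟨v, hv⟩)
    (sInf {ℓ : ℕ | 1 ≤ ℓ ∧ ℓ ≤ n ∧ ¬ IsBounded (fsBadSet h u x j ℓ)}) hsInf_mem.2.2
  have hupp := Nat.sInf_le hkle_mem
  have hBP : finiteSampleBP h u x j =
      ((sInf {ℓ : ℕ | 1 ≤ ℓ ∧ ℓ ≤ n ∧ ¬ IsBounded (fsBadSet h u x j ℓ)} : ℕ) : ℝ) / n := rfl
  refine ⟨⟨?_, ?_⟩, ?_⟩
  · rw [hTDlt, hBP, ← add_div]
    apply (div_le_div_iff_of_pos_right hnR).mpr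
    have : ((Finset.univ.filter fun i => ⟪(vlt : Euc d), u i - u j⟫ < 0).card + 1 : ℝ)
        = (((Finset.univ.filter fun i => ⟪(vlt : Euc d), u i - u j⟫ < 0).card + 1 : ℕ) : ℝ) := by
      push_cast; ring
    rw [this]
    exact_mod_cast hlow
  · rw [hTDle, hBP]
    apply (div_le_div_iff_of_pos_right hnR).mpr
    exact_mod_cast hupp
  · intro gp hdn
    obtain ⟨v, hvn, hvmin, hvties⟩ := gp_direction hd u j hu gp
    have hjnot : j ∉ Finset.univ.filter fun i => ⟪v, u i - u j⟫ < 0 := by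
      rw [Finset.mem_filter, sub_self, inner_zero_right]
      rintro ⟨-, hcon⟩
      exact lt_irrefl 0 hcon
    have hS'card : (insert j (Finset.univ.filter fun i => ⟪v, u i - u j⟫ < 0)).card =
        (Finset.univ.filter fun i => ⟪v, u i - u j⟫ < 0).card + 1 :=
      Finset.card_insert_of_notMem hjnot
    have hcardeq : (Finset.univ.filter fun i => ⟪v, u i - u j⟫ < 0).card =
        (Finset.univ.filter fun i => ⟪(vlt : Euc d), u i - u j⟫ < 0).card :=
      le_antisymm (hvmin (vlt : Euc d) vlt.2) (hvltmin ⟨v, hvn⟩)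
    have hS'pos : ∀ i, i ∉ insert j (Finset.univ.filter fun i => ⟪v, u i - u j⟫ < 0) →
        0 < ⟪v, u i - u j⟫ := by
      intro i hi
      rw [Finset.mem_insert] at hi
      push_neg at hi
      obtain ⟨hij, hnf⟩ := hi
      rw [Finset.mem_filter] at hnf
      push_neg at hnf
      have hnlt := hnf (Finset.mem_univ i)
      exact lt_of_le_of_ne hnlt (Ne.symm (hvties i hij))
    have hunb' := construct_unbounded h u x j h1 h3 hpos v hvn
      (insert j (Finset.univ.filter fun i => ⟪v, u i - u j⟫ < 0))
      (Finset.mem_insert_self j _) hS'pos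
    have hcardn : (Finset.univ.filter fun i => ⟪v, u i - u j⟫ < 0).card + 1 ≤ n := by
      have hsub : (Finset.univ.filter fun i => ⟪v, u i - u j⟫ < 0) ⊆
          Finset.univ.erase j := by
        intro i hi
        rw [Finset.mem_erase]
        refine ⟨?_, Finset.mem_univ i⟩
        intro hij
        rw [hij] at hi
        exact hjnot hi
      have hle := Finset.card_le_card hsub
      rw [Finset.card_erase_of_mem (Finset.mem_univ j), Finset.card_univ,
        Fintype.card_fin] at hle
      omega
    have hmem' : (insert j (Finset.univ.filter fun i => ⟪v, u i - u j⟫ < 0)).card ∈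
        {ℓ : ℕ | 1 ≤ ℓ ∧ ℓ ≤ n ∧ ¬ IsBounded (fsBadSet h u x j ℓ)} := by
      refine ⟨?_, ?_, hunb'⟩
      · rw [hS'card]; omega
      · rw [hS'card]; exact hcardn
    have hupp' := Nat.sInf_le hmem'
    rw [hS'card, hcardeq] at hupp'
    have heq : sInf {ℓ : ℕ | 1 ≤ ℓ ∧ ℓ ≤ n ∧ ¬ IsBounded (fsBadSet h u x j ℓ)} =
        (Finset.univ.filter fun i => ⟪(vlt : Euc d), u i - u j⟫ < 0).card + 1 :=
      le_antisymm hupp' hlow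
    rw [hBP, hTDlt, heq]
    push_cast
    rw [← add_div]

end
end

section
/- Assume the cost c(x,y) = h(x−y) satisfies (H1)–(H3). Let f_n be a sequence of c-concave functions on ℝ^d such that no subsequence of the sequence of sets {∂^c f_n} ⊂ ℝ^d × ℝ^d escapes to the horizon, and let (u_n, p_n) ∈ ∂^c f_n with {u_n} bounded, the closure of {u_n} contained in the interior of ⋂_n dom(f_n), and ‖p_n‖ → ∞. Then for every limit point u of the sequence {u_n}, there exist a unit vector v ∈ S^{d−1} and a strictly increasing sequence of indices (n_k) such that for every compact set K ⊂ {z ∈ ℝ^d : ⟨v, z − u⟩ < 0}, the sequence of sets {∂^c f_{n_k}(K)} escapes to the horizon. -/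
open Filter MeasureTheory Bornology Topology Set
open scoped RealInnerProductSpace ENNReal BigOperators Classical

noncomputable section

set_option maxHeartbeats 1000000 in
lemma gap_lemma {d : ℕ} {h : Euc d → ℝ} (hcx : ConvexOn ℝ Set.univ h)
    (h0 : 0 ≤ h 0) {q s z : Euc d} {r θ δ C S : ℝ}
    (hz : z ≠ 0)
    (hq1 : 1 ≤ ‖q‖) (hH3 : C * ‖q‖ ≤ h q)
    (hcone : ∀ x ∈ TruncCone r θ z q, h x ≤ h q)
    (hδ0 : 0 < δ) (hδ1 : δ ≤ 1)
    (hws : δ ≤ ⟪‖z‖⁻¹ • z, s⟫) (hS : ‖s‖ ≤ S) (hS0 : 0 ≤ S)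
    (hr : 2 * (S + 1) ≤ r)
    (hcosnn : 0 ≤ Real.cos (θ / 2))
    (hcos : Real.cos (θ / 2) * (2 * (S + 1)) ≤ δ / 2) :
    h (q + s) + δ / 2 * (C - h 0) ≤ h q := by
  have hq0 : q ≠ 0 := by
    intro hq; rw [hq, norm_zero] at hq1; linarith
  have hnz : (0:ℝ) < ‖z‖ := norm_pos_iff.mpr hz
  have hnq : (0:ℝ) < ‖q‖ := by linarith
  set w : Euc d := ‖z‖⁻¹ • z with hw
  have hnw : ‖w‖ = 1 := norm_smul_inv_norm hz
  set lam : ℝ := δ / 2 with hlam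
  have hlam0 : 0 < lam := by positivity
  have hlam1 : lam ≤ 1/2 := by rw [hlam]; linarith
  set qhat : Euc d := ‖q‖⁻¹ • q with hqhat
  have hnqhat : ‖qhat‖ = 1 := norm_smul_inv_norm hq0
  have h1lam : (0:ℝ) < 1 - lam := by linarith
  set c : Euc d := (1 - lam)⁻¹ • (s + lam • qhat) with hc
  have hkey : q + s = lam • (q - qhat) + (1 - lam) • (q + c) := by
    have h1 : (1 - lam) • c = s + lam • qhat := smul_inv_smul₀ (ne_of_gt h1lam) _
    rw [smul_add, h1]
    module
  have hwqhat : |⟪w, qhat⟫| ≤ 1 := by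
    have := abs_real_inner_le_norm w qhat
    rwa [hnw, hnqhat, one_mul] at this
  have hwc_eq : ⟪w, c⟫ = (1 - lam)⁻¹ * (⟪w, s⟫ + lam * ⟪w, qhat⟫) := by
    rw [hc, real_inner_smul_right, inner_add_right, real_inner_smul_right]
  have hwc_pos : δ / 2 ≤ ⟪w, c⟫ := by
    have h2 : δ - lam ≤ ⟪w, s⟫ + lam * ⟪w, qhat⟫ := by
      have : -1 ≤ ⟪w, qhat⟫ := by cases' abs_le.mp hwqhat with h' _; linarith
      nlinarith [hws]
    have h3 : (1:ℝ) ≤ (1 - lam)⁻¹ := by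
      rw [le_inv_comm₀] <;> linarith
    calc δ / 2 = δ - lam := by rw [hlam]; ring
      _ ≤ ⟪w, s⟫ + lam * ⟪w, qhat⟫ := h2
      _ ≤ (1 - lam)⁻¹ * (⟪w, s⟫ + lam * ⟪w, qhat⟫) := by
          apply le_mul_of_one_le_left (by linarith) h3
      _ = ⟪w, c⟫ := hwc_eq.symm
  have hcnorm : ‖c‖ ≤ 2 * (S + 1) := by
    have h1 : ‖s + lam • qhat‖ ≤ S + lam := by
      calc ‖s + lam • qhat‖ ≤ ‖s‖ + ‖lam • qhat‖ := norm_add_le _ _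
        _ = ‖s‖ + |lam| := by rw [norm_smul, hnqhat, mul_one, Real.norm_eq_abs]
        _ ≤ S + lam := by rw [abs_of_pos hlam0]; linarith
    have h2 : (1 - lam)⁻¹ ≤ 2 := by
      rw [inv_le_comm₀ h1lam (by norm_num)]; linarith
    calc ‖c‖ = (1 - lam)⁻¹ * ‖s + lam • qhat‖ := by
          rw [hc, norm_smul, Real.norm_eq_abs, abs_of_pos (inv_pos.mpr h1lam)]
      _ ≤ 2 * (S + 1) := mul_le_mul h2 (h1.trans (by linarith)) (norm_nonneg _) (by norm_num)
  have hzc : ⟪z, c⟫ = ‖z‖ * ⟪w, c⟫ := by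
    rw [hw, real_inner_smul_left]; field_simp
  have hmemcone : q + c ∈ TruncCone r θ z q := by
    constructor
    · rw [add_sub_cancel_left, hzc]
      have h1 : ‖c‖ * Real.cos (θ / 2) ≤ δ / 2 := by
        calc ‖c‖ * Real.cos (θ / 2) ≤ 2 * (S + 1) * Real.cos (θ / 2) := by
              apply mul_le_mul_of_nonneg_right hcnorm hcosnn
          _ = Real.cos (θ / 2) * (2 * (S + 1)) := by ring
          _ ≤ δ / 2 := hcos
      calc ‖c‖ * ‖z‖ * Real.cos (θ / 2) = ‖z‖ * (‖c‖ * Real.cos (θ / 2)) := by ring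
        _ ≤ ‖z‖ * (δ / 2) := by apply mul_le_mul_of_nonneg_left h1 (le_of_lt hnz)
        _ ≤ ‖z‖ * ⟪w, c⟫ := by apply mul_le_mul_of_nonneg_left hwc_pos (le_of_lt hnz)
    · rw [add_sub_cancel_left, hzc]
      have h1 : ⟪w, c⟫ ≤ r := by
        calc ⟪w, c⟫ ≤ ‖w‖ * ‖c‖ := real_inner_le_norm _ _
          _ = ‖c‖ := by rw [hnw, one_mul]
          _ ≤ 2 * (S + 1) := hcnorm
          _ ≤ r := hr
      calc ‖z‖ * ⟪w, c⟫ ≤ ‖z‖ * r := mul_le_mul_of_nonneg_left h1 (le_of_lt hnz)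
        _ = r * ‖z‖ := by ring
  have hqc : h (q + c) ≤ h q := hcone _ hmemcone
  have hqq : h (q - qhat) ≤ h q - (C - h 0) := by
    have ht0 : (0:ℝ) ≤ ‖q‖⁻¹ := by positivity
    have ht1 : ‖q‖⁻¹ ≤ 1 := by
      rw [inv_le_one_iff₀]; right; linarith
    have hrep : q - qhat = (1 - ‖q‖⁻¹) • q + ‖q‖⁻¹ • (0 : Euc d) := by
      rw [smul_zero, add_zero, hqhat, sub_smul, one_smul]
    have := hcx.2 (Set.mem_univ q) (Set.mem_univ (0 : Euc d))
      (by linarith : (0:ℝ) ≤ 1 - ‖q‖⁻¹) ht0 (by ring)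
    rw [← hrep] at this
    rw [smul_eq_mul, smul_eq_mul] at this
    have hinv : ‖q‖⁻¹ * ‖q‖ = 1 := inv_mul_cancel₀ (ne_of_gt hnq)
    have e1 : C ≤ ‖q‖⁻¹ * h q := by
      have e2 := mul_le_mul_of_nonneg_left hH3 ht0
      calc C = ‖q‖⁻¹ * (C * ‖q‖) := by rw [mul_comm C, ← mul_assoc, hinv, one_mul]
        _ ≤ ‖q‖⁻¹ * h q := e2
    have e3 : ‖q‖⁻¹ * h 0 ≤ h 0 := mul_le_of_le_one_left h0 ht1
    linarith [this, e1, e3]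
  have hcomb : h (q + s) ≤ lam * h (q - qhat) + (1 - lam) * h (q + c) := by
    have := hcx.2 (Set.mem_univ (q - qhat)) (Set.mem_univ (q + c))
      (le_of_lt hlam0) (by linarith : (0:ℝ) ≤ 1 - lam) (by ring)
    rwa [← hkey] at this
  have hb1 : lam * h (q - qhat) ≤ lam * (h q - (C - h 0)) :=
    mul_le_mul_of_nonneg_left hqq (le_of_lt hlam0)
  have hb2 : (1 - lam) * h (q + c) ≤ (1 - lam) * h q :=
    mul_le_mul_of_nonneg_left hqc (by linarith)
  have : h (q + s) + lam * (C - h 0) ≤ h q := by linarith [hcomb, hb1, hb2]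
  exact this

set_option maxHeartbeats 1000000 in
/-- technical lemma, part (iii): in the setting of part (i), for every limit
point `a` of `{u_n}` there are a unit vector `v` and a subsequence along which `{∂^c f_n(K)}`
escapes to the horizon for every compact `K ⊂ {z : ⟨v, z - a⟩ < 0}`. -/
theorem technical_lemma_part_iii (d : ℕ) (hd : 1 ≤ d) (h : Euc d → ℝ)
    (hpos : ∀ x, 0 ≤ h x) (h1 : H1 h) (h2 : H2 h) (h3 : H3 h)
    (f : ℕ → Euc d → EReal) (hconc : ∀ n, IsCConcave h (f n))
    (hnoesc : NoSubseqEscapes fun n => CSuperdiff h (f n))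
    (useq pseq : ℕ → Euc d)
    (hmem : ∀ n, (useq n, pseq n) ∈ CSuperdiff h (f n))
    (hbdd : IsBounded (Set.range useq))
    (hcl : closure (Set.range useq) ⊆ interior (⋂ n, edom (f n)))
    (hp : Tendsto (fun n => ‖pseq n‖) atTop atTop) :
    ∀ a : Euc d, MapClusterPt a atTop useq →
      ∃ v : Euc d, ‖v‖ = 1 ∧ ∃ φ : ℕ → ℕ, StrictMono φ ∧
        ∀ K : Set (Euc d), IsCompact K → K ⊆ {z : Euc d | ⟪v, z - a⟫ < 0} →
          EscapesToHorizon fun k => CSuperdiffImg h (f (φ k)) K := by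
  intro a ha
  have hcx : ConvexOn ℝ Set.univ h := h1.convexOn
  have hcont : Continuous h := by
    rw [← continuousOn_univ]
    exact hcx.continuousOn isOpen_univ
  obtain ⟨A, hA⟩ : ∃ A : ℝ, ∀ n, ‖useq n‖ ≤ A := by
    obtain ⟨A, hA⟩ := isBounded_iff_forall_norm_le.mp hbdd
    exact ⟨A, fun n => hA _ (Set.mem_range_self n)⟩
  have hA0 : 0 ≤ A := le_trans (norm_nonneg _) (hA 0)
  have hudom : ∀ n, f n (useq n) ≠ ⊥ := by
    intro n
    have hu1 : useq n ∈ interior (⋂ m, edom (f m)) :=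
      hcl (subset_closure (Set.mem_range_self n))
    have hu2 : useq n ∈ ⋂ m, edom (f m) := interior_subset hu1
    exact Set.mem_iInter.mp hu2 n
  have hftop : ∀ n x, f n x ≠ ⊤ := by
    intro n x
    obtain ⟨T, ⟨p₀, hp₀⟩, hrepr⟩ := hconc n
    rw [hrepr x]
    exact ne_top_of_le_ne_top (EReal.coe_ne_top _) (iInf₂_le p₀ hp₀)
  obtain ⟨ψ, hψ, hψa⟩ := TopologicalSpace.FirstCountableTopology.tendsto_subseq ha
  set q : ℕ → Euc d := fun n => useq n - pseq n with hq
  have hqinf : Tendsto (fun j => ‖q (ψ j)‖) atTop atTop := by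
    apply tendsto_atTop_mono' atTop ?_
      (tendsto_atTop_add_const_right atTop (-A) (hp.comp hψ.tendsto_atTop))
    filter_upwards with j
    have h1' : ‖pseq (ψ j)‖ ≤ ‖useq (ψ j)‖ + ‖q (ψ j)‖ := by
      have : pseq (ψ j) = useq (ψ j) - q (ψ j) := by rw [hq]; module
      rw [this]
      exact norm_sub_le _ _
    have := hA (ψ j)
    simp only [Function.comp_apply]
    linarith
  -- stage data
  have hθmem : ∀ k : ℕ, Real.pi - ((k:ℝ)+1)⁻¹ ∈ Set.Ioo 0 Real.pi := by
    intro k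
    have hk0 : (0:ℝ) ≤ (k:ℝ) := Nat.cast_nonneg k
    have hkpos : (0:ℝ) < (k:ℝ)+1 := by linarith
    have hkinv0 : (0:ℝ) < ((k:ℝ)+1)⁻¹ := by positivity
    have hkinv1 : ((k:ℝ)+1)⁻¹ ≤ 1 := by
      rw [inv_le_one_iff₀]; right; linarith
    constructor
    · have := Real.pi_gt_three; linarith
    · linarith
  have h2k : ∀ k : ℕ, ∃ M, 0 < M ∧ ∀ p : Euc d, M < ‖p‖ → ∃ z, z ≠ 0 ∧
      ∀ x ∈ TruncCone ((k:ℝ)+1) (Real.pi - ((k:ℝ)+1)⁻¹) z p, h x ≤ h p :=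
    fun k => h2 ((k:ℝ)+1) (by positivity) _ (hθmem k)
  choose Mf hMpos hMcone using h2k
  choose R3 hR3 using h3
  have hPfreq : ∀ k : ℕ, ∃ᶠ j in atTop, max (Mf k) (max (R3 (k:ℝ)) 1) < ‖q (ψ j)‖ :=
    fun k => (hqinf.eventually_gt_atTop _).frequently
  obtain ⟨ξ, hξ, hξP⟩ := Filter.extraction_forall_of_frequently hPfreq
  have hQ1 : ∀ k : ℕ, 1 ≤ ‖q (ψ (ξ k))‖ := fun k =>
    le_of_lt (lt_of_le_of_lt (le_max_of_le_right (le_max_right _ _)) (hξP k))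
  have hQM : ∀ k : ℕ, Mf k < ‖q (ψ (ξ k))‖ := fun k =>
    lt_of_le_of_lt (le_max_left _ _) (hξP k)
  have hQR : ∀ k : ℕ, R3 (k:ℝ) ≤ ‖q (ψ (ξ k))‖ := fun k =>
    le_of_lt (lt_of_le_of_lt (le_max_of_le_right (le_max_left _ _)) (hξP k))
  have h2app : ∀ k : ℕ, ∃ z : Euc d, z ≠ 0 ∧
      ∀ x ∈ TruncCone ((k:ℝ)+1) (Real.pi - ((k:ℝ)+1)⁻¹) z (q (ψ (ξ k))), h x ≤ h (q (ψ (ξ k))) :=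
    fun k => hMcone k _ (hQM k)
  choose zf hzne hzcone using h2app
  set wseq : ℕ → Euc d := fun k => ‖zf k‖⁻¹ • zf k with hwseq
  have hwmem : ∀ k, wseq k ∈ Metric.sphere (0 : Euc d) 1 := fun k =>
    mem_sphere_zero_iff_norm.mpr (norm_smul_inv_norm (hzne k))
  obtain ⟨w0, hw0, κ, hκ, hκt⟩ := (isCompact_sphere (0:Euc d) 1).tendsto_subseq hwmem
  have hw0n : ‖w0‖ = 1 := mem_sphere_zero_iff_norm.mp hw0
  refine ⟨-w0, by rw [norm_neg, hw0n], fun l => ψ (ξ (κ l)), hψ.comp (hξ.comp hκ), ?_⟩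
  intro K hK hKsub
  rcases K.eq_empty_or_nonempty with rfl | hKne
  · intro R hR
    exact ⟨0, fun n _ y hy => by simp [CSuperdiffImg] at hy⟩
  -- K data
  have hcontg : Continuous fun x : Euc d => ⟪w0, x - a⟫ :=
    continuous_const.inner (continuous_id.sub continuous_const)
  obtain ⟨x₀, hx₀K, hx₀min⟩ := hK.exists_isMinOn hKne hcontg.continuousOn
  set δ' : ℝ := ⟪w0, x₀ - a⟫ with hδ'
  have hδ'pos : 0 < δ' := by
    have := hKsub hx₀K
    simp only [Set.mem_setOf_eq, inner_neg_left] at this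
    linarith
  have hδ'min : ∀ x ∈ K, δ' ≤ ⟪w0, x - a⟫ := fun x hx => isMinOn_iff.mp hx₀min x hx
  obtain ⟨S₀, hS₀⟩ : ∃ S₀ : ℝ, ∀ x ∈ K, ‖x - a‖ ≤ S₀ := by
    obtain ⟨S₀, hS₀⟩ := isBounded_iff_forall_norm_le.mp
      ((hK.image (continuous_id.sub continuous_const)).isBounded)
    exact ⟨S₀, fun x hx => hS₀ _ (Set.mem_image_of_mem _ hx)⟩
  have hS₀0 : 0 ≤ S₀ := le_trans (norm_nonneg _) (hS₀ x₀ hx₀K)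
  set ε : ℝ := min δ' 1 with hε
  have hε0 : 0 < ε := lt_min hδ'pos one_pos
  have hε1 : ε ≤ 1 := min_le_right _ _
  have hεδ : ε ≤ δ' := min_le_left _ _
  set S : ℝ := S₀ + 1 with hSdef
  have hS0 : (0:ℝ) ≤ S := by rw [hSdef]; linarith
  -- limits
  have hulim : Tendsto (fun l => useq (ψ (ξ (κ l)))) atTop (𝓝 a) :=
    hψa.comp ((hξ.comp hκ).tendsto_atTop)
  have hκt' : Tendsto (fun l => wseq (κ l)) atTop (𝓝 w0) := hκt
  have hwt : Tendsto (fun l => ‖wseq (κ l) - w0‖) atTop (𝓝 0) := by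
    have h1' : Tendsto (fun l => wseq (κ l) - w0) atTop (𝓝 0) := by
      simpa using hκt'.sub (tendsto_const_nhds : Tendsto (fun _ : ℕ => w0) atTop (𝓝 w0))
    simpa using h1'.norm
  have hut : Tendsto (fun l => ‖a - useq (ψ (ξ (κ l)))‖) atTop (𝓝 0) := by
    have h1' : Tendsto (fun l => a - useq (ψ (ξ (κ l)))) atTop (𝓝 0) := by
      simpa using (tendsto_const_nhds : Tendsto (fun _ : ℕ => a) atTop (𝓝 a)).sub hulim
    simpa using h1'.norm
  have hEV1 : ∀ᶠ l in atTop, ∀ x ∈ K,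
      ε/2 ≤ ⟪wseq (κ l), x - useq (ψ (ξ (κ l)))⟫ ∧ ‖x - useq (ψ (ξ (κ l)))‖ ≤ S := by
    have hc1 : ∀ᶠ l in atTop, ‖wseq (κ l) - w0‖ < ε/(4*(S₀+1)) :=
      hwt.eventually_lt_const (by positivity)
    have hc2 : ∀ᶠ l in atTop, ‖a - useq (ψ (ξ (κ l)))‖ < ε/4 :=
      hut.eventually_lt_const (by positivity)
    filter_upwards [hc1, hc2] with l hl1 hl2
    intro x hx
    have hxa : ‖x - a‖ ≤ S₀ := hS₀ x hx
    have hsplit : x - useq (ψ (ξ (κ l))) = (x - a) + (a - useq (ψ (ξ (κ l)))) := by abel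
    constructor
    · have e1 : ⟪wseq (κ l), x - useq (ψ (ξ (κ l)))⟫
          = ⟪w0, x - a⟫ + ⟪wseq (κ l) - w0, x - a⟫ + ⟪wseq (κ l), a - useq (ψ (ξ (κ l)))⟫ := by
        rw [hsplit, inner_add_right, inner_sub_left]
        ring
      have e2 : |⟪wseq (κ l) - w0, x - a⟫| ≤ ε/(4*(S₀+1)) * S₀ := by
        calc |⟪wseq (κ l) - w0, x - a⟫| ≤ ‖wseq (κ l) - w0‖ * ‖x - a‖ :=
              abs_real_inner_le_norm _ _
          _ ≤ ε/(4*(S₀+1)) * S₀ :=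
              mul_le_mul (le_of_lt hl1) hxa (norm_nonneg _) (by positivity)
      have e2' : ε/(4*(S₀+1)) * S₀ ≤ ε/4 := by
        rw [div_mul_eq_mul_div, div_le_div_iff₀ (by positivity) (by norm_num)]
        nlinarith
      have e3 : |⟪wseq (κ l), a - useq (ψ (ξ (κ l)))⟫| ≤ ε/4 := by
        calc |⟪wseq (κ l), a - useq (ψ (ξ (κ l)))⟫|
            ≤ ‖wseq (κ l)‖ * ‖a - useq (ψ (ξ (κ l)))‖ := abs_real_inner_le_norm _ _
          _ = ‖a - useq (ψ (ξ (κ l)))‖ := by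
              rw [mem_sphere_zero_iff_norm.mp (hwmem (κ l)), one_mul]
          _ ≤ ε/4 := le_of_lt hl2
      have e4 : δ' ≤ ⟪w0, x - a⟫ := hδ'min x hx
      have e5 := abs_le.mp e2
      have e6 := abs_le.mp e3
      rw [e1]
      linarith [e2', e5.1, e6.1]
    · have hna := norm_add_le (x - a) (a - useq (ψ (ξ (κ l))))
      rw [← hsplit] at hna
      rw [hSdef]
      linarith
  -- the escape statement
  intro R hR
  obtain ⟨CB, hCB⟩ : ∃ CB : ℝ, ∀ v : Euc d, ‖v‖ ≤ A + R → h v ≤ CB := by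
    obtain ⟨vm, _, hvm⟩ := (isCompact_closedBall (0:Euc d) (A+R)).exists_isMaxOn
      ⟨0, Metric.mem_closedBall_self (by positivity)⟩ hcont.continuousOn
    exact ⟨h vm, fun v hv => isMaxOn_iff.mp hvm v (mem_closedBall_zero_iff.mpr hv)⟩
  have hκcast : Tendsto (fun l : ℕ => ((κ l : ℕ) : ℝ)) atTop atTop :=
    tendsto_natCast_atTop_atTop.comp hκ.tendsto_atTop
  have hEV2 : ∀ᶠ l in atTop, (2*(S+1) ≤ ((κ l : ℝ)+1)) ∧ ((S+1) * 4 ≤ ε * ((κ l:ℝ)+1))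
      ∧ (CB < ε/4 * ((κ l:ℝ) - h 0)) := by
    have e1 : ∀ᶠ l in atTop, 2*(S+1) ≤ ((κ l : ℝ)+1) :=
      (hκcast.eventually_ge_atTop (2*(S+1))).mono (fun l hl => by linarith)
    have e2 : ∀ᶠ l in atTop, (S+1) * 4 ≤ ε * ((κ l:ℝ)+1) := by
      refine (hκcast.eventually_ge_atTop ((S+1)*4/ε)).mono (fun l hl => ?_)
      rw [div_le_iff₀ hε0] at hl
      nlinarith
    have e3 : ∀ᶠ l in atTop, CB < ε/4 * ((κ l:ℝ) - h 0) := by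
      refine (hκcast.eventually_ge_atTop (4*CB/ε + h 0 + 1)).mono (fun l hl => ?_)
      have h5 : 4*CB/ε + 1 ≤ (κ l:ℝ) - h 0 := by linarith
      have h6 : CB + ε/4 = ε/4 * (4*CB/ε + 1) := by field_simp
      have h7 : ε/4 * (4*CB/ε + 1) ≤ ε/4 * ((κ l:ℝ) - h 0) :=
        mul_le_mul_of_nonneg_left h5 (by positivity)
      linarith
    exact e1.and (e2.and e3)
  obtain ⟨N, hN⟩ := Filter.eventually_atTop.mp (hEV1.and hEV2)
  refine ⟨N, ?_⟩
  intro l hl y hy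
  by_contra hylt
  push_neg at hylt
  simp only [CSuperdiffImg, Set.mem_iUnion] at hy
  obtain ⟨x, hxK, hxy⟩ := hy
  obtain ⟨hgeo, hnum1, hnum2, hnum3⟩ := hN l hl
  obtain ⟨hinner, hsnorm⟩ := hgeo x hxK
  set n' := ψ (ξ (κ l)) with hn'
  -- EReal to real
  have hfu := hudom n'
  have hfu_top := hftop n' (useq n')
  have hfx_top := hftop n' x
  have hxy' : (x, y) ∈ CSuperdiff h (f n') := hxy
  have hfx : f n' x ≠ ⊥ := by
    intro hbot
    have h1' := hxy' (useq n')
    simp only at h1'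
    rw [hbot, EReal.bot_add] at h1'
    exact hfu (le_bot_iff.mp h1')
  set ru : ℝ := (f n' (useq n')).toReal with hrudef
  set rx : ℝ := (f n' x).toReal with hrxdef
  have hru : ((ru : ℝ) : EReal) = f n' (useq n') := EReal.coe_toReal hfu_top hfu
  have hrx : ((rx : ℝ) : EReal) = f n' x := EReal.coe_toReal hfx_top hfx
  have hI1 : rx ≤ ru + (cost h x (pseq n') - cost h (useq n') (pseq n')) := by
    have h1' := (hmem n') x
    simp only at h1'
    rw [← hru, ← hrx, ← EReal.coe_add] at h1'
    exact EReal.coe_le_coe_iff.mp h1'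
  have hI2 : ru ≤ rx + (cost h (useq n') y - cost h x y) := by
    have h1' := hxy' (useq n')
    simp only at h1'
    rw [← hru, ← hrx, ← EReal.coe_add] at h1'
    exact EReal.coe_le_coe_iff.mp h1'
  -- cone/cos facts at stage κ l
  have hcosid : Real.cos ((Real.pi - ((κ l:ℝ)+1)⁻¹)/2) = Real.sin (((κ l:ℝ)+1)⁻¹/2) := by
    rw [show (Real.pi - ((κ l:ℝ)+1)⁻¹)/2 = Real.pi/2 - ((κ l:ℝ)+1)⁻¹/2 by ring, Real.cos_pi_div_two_sub]
  have hk0 : (0:ℝ) ≤ (κ l : ℝ) := Nat.cast_nonneg _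
  have hkinvpos : (0:ℝ) < ((κ l:ℝ)+1)⁻¹ := by positivity
  have hkinv1 : ((κ l:ℝ)+1)⁻¹ ≤ 1 := by
    rw [inv_le_one_iff₀]; right; linarith
  have hcosnn : 0 ≤ Real.cos ((Real.pi - ((κ l:ℝ)+1)⁻¹)/2) := by
    rw [hcosid]
    apply Real.sin_nonneg_of_nonneg_of_le_pi (by positivity)
    have := Real.pi_gt_three
    linarith
  have hcosle : Real.cos ((Real.pi - ((κ l:ℝ)+1)⁻¹)/2) ≤ ((κ l:ℝ)+1)⁻¹/2 := by
    rw [hcosid]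
    exact Real.sin_le (by positivity)
  have hcosS : Real.cos ((Real.pi - ((κ l:ℝ)+1)⁻¹)/2) * (2 * (S + 1)) ≤ (ε/2) / 2 := by
    have hstep : ((κ l:ℝ)+1)⁻¹/2 * (2 * (S + 1)) ≤ ε/4 := by
      have : ((κ l:ℝ)+1)⁻¹/2 * (2 * (S + 1)) = (S+1) * ((κ l:ℝ)+1)⁻¹ := by ring
      rw [this, ← div_eq_mul_inv, div_le_iff₀ (by positivity)]
      linarith
    calc Real.cos ((Real.pi - ((κ l:ℝ)+1)⁻¹)/2) * (2 * (S + 1))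
        ≤ ((κ l:ℝ)+1)⁻¹/2 * (2 * (S + 1)) :=
          mul_le_mul_of_nonneg_right hcosle (by positivity)
      _ ≤ ε/4 := hstep
      _ = (ε/2)/2 := by ring
  -- gap lemma
  have hH3q : (κ l : ℝ) * ‖q n'‖ ≤ h (q n') := hR3 (κ l : ℝ) _ (hQR (κ l))
  have hgap := gap_lemma hcx (hpos 0) (hzne (κ l)) (hQ1 (κ l)) hH3q (hzcone (κ l))
    (by positivity : (0:ℝ) < ε/2) (by linarith : ε/2 ≤ 1)
    hinner hsnorm hS0 hnum1 hcosnn hcosS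
  have hqs : q n' + (x - useq n') = x - pseq n' := by rw [hq]; module
  rw [hqs] at hgap
  -- combine
  have hxynorm : ‖useq n' - y‖ ≤ A + R := by
    calc ‖useq n' - y‖ ≤ ‖useq n'‖ + ‖y‖ := norm_sub_le _ _
      _ ≤ A + R := add_le_add (hA n') (le_of_lt hylt)
  have hub : h (useq n' - y) ≤ CB := hCB _ hxynorm
  have hlb : 0 ≤ h (x - y) := hpos _
  simp only [cost] at hI1 hI2
  have hfinal : (ε/2)/2 * ((κ l:ℝ) - h 0) ≤ CB := by linarith
  have : ε/4 * ((κ l:ℝ) - h 0) ≤ CB := by linarith [hfinal]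
  linarith


end
end

section
/- Assume the cost c(x,y) = h(x−y) satisfies (H1)–(H3). Fix ε ∈ (0,1), let Q be a Borel probability measure on ℝ^d absolutely continuous with respect to Lebesgue measure, P a Borel probability measure on ℝ^d, and {ν_n} any sequence of Borel probability measures on ℝ^d. If for each n the function f_n is a Kantorovich potential for (Q, (1−ε)P + εν_n), then no subsequence of the sequence of sets {∂^c f_n} ⊂ ℝ^d × ℝ^d escapes to the horizon. -/
open Filter MeasureTheory Bornology Topology Set
open scoped RealInnerProductSpace ENNReal BigOperators Classical

noncomputable section

/-- if `f_n` are Kantorovich potentials for `(Q, (1-ε)P + ε ν_n)`, then no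
subsequence of `{∂^c f_n}` escapes to the horizon. -/
theorem no_subseq_escapes_of_kantorovich (d : ℕ) (hd : 1 ≤ d) (h : Euc d → ℝ)
    (hpos : ∀ x, 0 ≤ h x) (h1 : H1 h) (h2 : H2 h) (h3 : H3 h)
    (ε : ℝ) (hε : ε ∈ Set.Ioo (0 : ℝ) 1)
    (Q P : Measure (Euc d)) [IsProbabilityMeasure Q] [IsProbabilityMeasure P]
    (hQ : Q ≪ volume)
    (ν : ℕ → Measure (Euc d)) (hν : ∀ n, IsProbabilityMeasure (ν n))
    (f : ℕ → Euc d → EReal)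
    (hf : ∀ n, IsKantorovichPotential h Q
      (ENNReal.ofReal (1 - ε) • P + ENNReal.ofReal ε • ν n) (f n)) :
    NoSubseqEscapes fun n => CSuperdiff h (f n) := by
  intro φ hφ hesc
  -- choose R₁ with P (ball 0 R₁) > 0
  have hUball : (⋃ n : ℕ, Metric.ball (0 : Euc d) n) = Set.univ := by
    ext x
    simp only [Set.mem_iUnion, Metric.mem_ball, dist_zero_right, Set.mem_univ, iff_true]
    obtain ⟨n, hn⟩ := exists_nat_gt ‖x‖
    exact ⟨n, hn⟩
  have hPball : ∃ R₁ : ℕ, 0 < P (Metric.ball (0 : Euc d) R₁) := by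
    by_contra hcon
    push_neg at hcon
    have hnull : ∀ n : ℕ, P (Metric.ball (0 : Euc d) n) = 0 := fun n =>
      le_antisymm (hcon n) zero_le
    have h0 := measure_iUnion_null (μ := P) hnull
    rw [hUball, measure_univ] at h0
    exact one_ne_zero h0
  obtain ⟨R₁, hR₁⟩ := hPball
  set c : ℝ≥0∞ := ENNReal.ofReal (1 - ε) * P (Metric.ball (0 : Euc d) R₁) with hc_def
  have hcpos : 0 < c := by
    refine ENNReal.mul_pos ?_ hR₁.ne'
    simp only [ne_eq, ENNReal.ofReal_eq_zero, not_le]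
    linarith [hε.2]
  -- choose R₂ with Q (ball 0 R₂)ᶜ < c
  have htend : Tendsto (fun n : ℕ => Q (Metric.ball (0 : Euc d) n)ᶜ) atTop (𝓝 0) := by
    have hI : (⋂ n : ℕ, (Metric.ball (0 : Euc d) n)ᶜ) = ∅ := by
      rw [← Set.compl_iUnion, hUball, Set.compl_univ]
    have := tendsto_measure_iInter_atTop (μ := Q)
      (s := fun n : ℕ => (Metric.ball (0 : Euc d) n)ᶜ)
      (fun n => (Metric.isOpen_ball.measurableSet.compl).nullMeasurableSet)
      (fun m n hmn => Set.compl_subset_compl.2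
        (Metric.ball_subset_ball (by exact_mod_cast hmn)))
      ⟨0, measure_ne_top Q _⟩
    rw [hI, measure_empty] at this
    exact this
  obtain ⟨R₂, hR₂⟩ := (htend.eventually_lt_const hcpos).exists
  -- apply escape with radius M
  obtain ⟨N, hN⟩ := hesc ((max (R₁ : ℝ) (R₂ : ℝ)) + 1)
    (by positivity)
  obtain ⟨-, T, hT, hmap⟩ := hf (φ N)
  -- T is AEMeasurable
  have hTae : AEMeasurable T Q := by
    by_contra hTm
    have h0 : Measure.map T Q = 0 := Measure.map_of_not_aemeasurable hTm
    rw [hmap] at h0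
    have huniv := congrArg (fun m : Measure (Euc d) => m Set.univ) h0
    have hν' := hν (φ N)
    simp only [Measure.coe_add, Pi.add_apply, Measure.coe_smul, Pi.smul_apply,
      measure_univ, smul_eq_mul, mul_one, Measure.coe_zero, Pi.zero_apply] at huniv
    have hε0 : (0 : ℝ≥0∞) < ENNReal.ofReal ε := by
      simp only [ENNReal.ofReal_pos]; exact hε.1
    have : (0 : ℝ≥0∞) < ENNReal.ofReal (1 - ε) + ENNReal.ofReal ε :=
      lt_of_lt_of_le hε0 le_add_self
    rw [huniv] at this
    exact lt_irrefl _ this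
  -- lower bound on Q (T ⁻¹' ball 0 R₁)
  have hS1 : c ≤ Q (T ⁻¹' Metric.ball (0 : Euc d) R₁) := by
    have hmapply := Measure.map_apply_of_aemeasurable hTae
      (Metric.isOpen_ball.measurableSet : MeasurableSet (Metric.ball (0 : Euc d) R₁))
    rw [hmap] at hmapply
    rw [← hmapply]
    simp only [Measure.coe_add, Pi.add_apply, Measure.coe_smul, Pi.smul_apply, smul_eq_mul]
    exact le_self_add
  set A : Set (Euc d) := {x | CSuperdiffAt h (f (φ N)) x = {T x}} with hA_def
  have hAc : Q Aᶜ = 0 := by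
    have := hT
    rw [MeasureTheory.ae_iff] at this
    exact this
  -- the good set is nonempty
  have hsub : T ⁻¹' Metric.ball (0 : Euc d) R₁ ⊆
      (T ⁻¹' Metric.ball (0 : Euc d) R₁ ∩ Metric.ball (0 : Euc d) R₂ ∩ A) ∪
        (Metric.ball (0 : Euc d) R₂)ᶜ ∪ Aᶜ := by
    intro x hx
    by_cases hx2 : x ∈ Metric.ball (0 : Euc d) R₂
    · by_cases hx3 : x ∈ A
      · exact Or.inl (Or.inl ⟨⟨hx, hx2⟩, hx3⟩)
      · exact Or.inr hx3
    · exact Or.inl (Or.inr hx2)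
  have hne : (T ⁻¹' Metric.ball (0 : Euc d) R₁ ∩ Metric.ball (0 : Euc d) R₂ ∩ A).Nonempty := by
    rw [Set.nonempty_iff_ne_empty]
    intro hemp
    have hle : Q (T ⁻¹' Metric.ball (0 : Euc d) R₁) ≤
        Q (T ⁻¹' Metric.ball (0 : Euc d) R₁ ∩ Metric.ball (0 : Euc d) R₂ ∩ A) +
          Q (Metric.ball (0 : Euc d) R₂)ᶜ + Q Aᶜ :=
      le_trans (measure_mono hsub)
        (le_trans (measure_union_le _ _) (add_le_add_left (measure_union_le _ _) _))
    rw [hemp, measure_empty, hAc, zero_add, add_zero] at hle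
    exact absurd (lt_of_le_of_lt (hS1.trans hle) hR₂) (lt_irrefl _)
  obtain ⟨x, ⟨hx1, hx2⟩, hx3⟩ := hne
  -- the pair (x, T x) is in the superdifferential
  have hmem : (x, T x) ∈ CSuperdiff h (f (φ N)) := by
    have : T x ∈ CSuperdiffAt h (f (φ N)) x := by
      rw [hx3]; rfl
    exact this
  have hbig := hN N le_rfl (x, T x) hmem
  have hxn : ‖x‖ < (R₂ : ℝ) := by
    rwa [Metric.mem_ball, dist_zero_right] at hx2
  have hTx : ‖T x‖ < (R₁ : ℝ) := by
    have : T x ∈ Metric.ball (0 : Euc d) R₁ := hx1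
    rwa [Metric.mem_ball, dist_zero_right] at this
  have hnorm : ‖((x, T x) : Euc d × Euc d)‖ = max ‖x‖ ‖T x‖ := Prod.norm_def _
  rw [hnorm] at hbig
  have hlt : max ‖x‖ ‖T x‖ < max (R₁ : ℝ) (R₂ : ℝ) + 1 :=
    max_lt (lt_of_lt_of_le hxn (le_trans (le_max_right _ _) (by linarith [le_refl (0:ℝ)])))
      (lt_of_lt_of_le hTx (le_trans (le_max_left _ _) (by linarith [le_refl (0:ℝ)])))
  linarith

end
end

section
/- Assume the cost c(x,y) = h(x−y) satisfies (H1)–(H3), and let Q, P be Borel probability measures on ℝ^d with Q absolutely continuous with respect to Lebesgue measure. Then for every u ∈ ℝ^d, the breakdown point of the optimal transport map at u satisfies BP(u) ≥ TD(u;Q). -/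
open Filter MeasureTheory Bornology Topology Set
open scoped RealInnerProductSpace ENNReal BigOperators Classical

noncomputable section

set_option maxHeartbeats 1600000

lemma exists_subgradient {d : ℕ} (h : Euc d → ℝ) (hconv : ConvexOn ℝ Set.univ h) (q : Euc d) :
    ∃ g : Euc d, ∀ x : Euc d, h q + ⟪g, x - q⟫ ≤ h x := by
  have hcont : Continuous h := by
    have := hconv.continuousOn isOpen_univ
    rwa [continuousOn_univ] at this
  set S : Set (Euc d × ℝ) := {p | h p.1 < p.2} with hS
  have hSopen : IsOpen S := isOpen_lt (hcont.comp continuous_fst) continuous_snd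
  have hSconv : Convex ℝ S := by
    rintro ⟨x, s⟩ hx ⟨y, t⟩ hy a b ha hb hab
    simp only [hS, mem_setOf_eq] at hx hy ⊢
    have h1 : h (a • x + b • y) ≤ a * h x + b * h y := by
      simpa [smul_eq_mul] using hconv.2 (mem_univ x) (mem_univ y) ha hb hab
    have h2 : a * h x + b * h y < a * s + b * t := by
      rcases eq_or_lt_of_le ha with rfl | ha'
      · simp only [zero_add] at hab; subst hab
        simpa using hy
      · have := mul_lt_mul_of_pos_left hx ha'
        have h3 : b * h y ≤ b * t := mul_le_mul_of_nonneg_left hy.le hb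
        simpa using add_lt_add_of_lt_of_le this h3
    calc h ((a • x + b • y : Euc d)) ≤ a * h x + b * h y := by
            simpa using h1
      _ < (a • (x, s) + b • (y, t)).2 := by simpa using h2
  have hqS : ((q, h q) : Euc d × ℝ) ∉ S := by simp [hS]
  obtain ⟨φ, hφ⟩ := geometric_hahn_banach_open_point hSconv hSopen hqS
  have hφeval : ∀ (x : Euc d) (t : ℝ), φ (x, t) = φ (x, 0) + t * φ (0, 1) := by
    intro x t
    have : ((x, t) : Euc d × ℝ) = (x, 0) + t • ((0 : Euc d), (1 : ℝ)) := by
      simp [Prod.ext_iff]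
    rw [this, map_add, φ.map_smul, smul_eq_mul]
  have hmem : ∀ (x : Euc d) (s : ℝ), 0 < s → ((x, h x + s) : Euc d × ℝ) ∈ S := by
    intro x s hs; simp [hS, hs]
  have hφ2 : φ (0, 1) < 0 := by
    have h1 := hφ _ (hmem q 1 one_pos)
    rw [hφeval q (h q + 1), hφeval q (h q)] at h1
    linarith
  have hkey : ∀ x : Euc d, φ (x, 0) + h x * φ (0, 1) ≤ φ (q, 0) + h q * φ (0, 1) := by
    intro x
    have h2 : ∀ s : ℝ, 0 < s → φ (x, 0) + h x * φ (0, 1) < φ (q, 0) + h q * φ (0, 1) + s * (-φ (0, 1)) := by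
      intro s hs
      have h1 := hφ _ (hmem x s hs)
      rw [hφeval x (h x + s), hφeval q (h q)] at h1
      nlinarith
    refine le_of_forall_pos_lt_add fun ε hε => ?_
    have := h2 (ε / (-φ (0, 1))) (div_pos hε (by linarith))
    rwa [div_mul_cancel₀] at this
    linarith
  set G : Euc d := (InnerProductSpace.toDual ℝ (Euc d)).symm (φ.comp (ContinuousLinearMap.inl ℝ (Euc d) ℝ)) with hG
  have hGx : ∀ x : Euc d, ⟪G, x⟫ = φ (x, 0) := by
    intro x
    rw [hG, InnerProductSpace.toDual_symm_apply]
    rfl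
  refine ⟨(-φ (0, 1))⁻¹ • G, fun x => ?_⟩
  have h1 := hkey x
  rw [← hGx, ← hGx] at h1
  have h2 : ⟪G, x - q⟫ ≤ (h x - h q) * (-φ (0, 1)) := by
    rw [inner_sub_right]; nlinarith
  have h3 : ⟪(-φ (0, 1))⁻¹ • G, x - q⟫ ≤ h x - h q := by
    rw [real_inner_smul_left]
    rw [inv_mul_le_iff₀ (by linarith : (0:ℝ) < -φ (0, 1))]
    linarith [h2]
  linarith

lemma keyDelta {d : ℕ} (h : Euc d → ℝ) (hconv : ConvexOn ℝ Set.univ h) (hpos : ∀ x, 0 ≤ h x)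
    (h3 : H3 h) (c₁ δ r'' G : ℝ) (hc0 : 0 < c₁) (hc1 : c₁ < 1) (hδ : 0 < δ) (hδr : δ ≤ r'') :
    ∃ R : ℝ, ∀ p v : Euc d, ‖v‖ = 1 → R ≤ ‖p‖ →
      (∀ w : Euc d, (c₁ / 2) * ‖w‖ ≤ ⟪v, w⟫ → ⟪v, w⟫ ≤ 4 * r'' → h (p + w) ≤ h p) →
      ∀ w : Euc d, c₁ * ‖w‖ ≤ ⟪v, w⟫ → δ ≤ ‖w‖ → ‖w‖ ≤ r'' → G < h p - h (p + w) := by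
  have hr'' : 0 < r'' := lt_of_lt_of_le hδ hδr
  set A : ℝ := 7 / (δ * c₁) with hA
  have hApos : 0 < A := by positivity
  clear_value A
  set C : ℝ := A * (|G| + 1) + h 0 with hC
  clear_value C
  obtain ⟨R₀, hR₀⟩ := h3 C
  refine ⟨max R₀ 1 + r'', fun p v hv hp hcone w hw1 hw2 hw3 => ?_⟩
  have hwpos : 0 < ‖w‖ := lt_of_lt_of_le hδ hw2
  set β : ℝ := ⟪v, w⟫ with hβ
  clear_value β
  have hβu : β ≤ ‖w‖ := by
    rw [hβ]
    calc (⟪v, w⟫ : ℝ) ≤ ‖v‖ * ‖w‖ := real_inner_le_norm v w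
      _ = ‖w‖ := by rw [hv, one_mul]
  have hβpos : 0 < β := lt_of_lt_of_le (by positivity) hw1
  set q : Euc d := p + w with hq
  clear_value q
  set Δ : ℝ := h p - h q with hΔ
  clear_value Δ
  have hΔ0 : 0 ≤ Δ := by
    have h1 : c₁ / 2 * ‖w‖ ≤ ⟪v, w⟫ := by
      rw [← hβ]
      linarith [hw1, mul_nonneg hc0.le (norm_nonneg w)]
    have h2 : (⟪v, w⟫ : ℝ) ≤ 4 * r'' := by
      rw [← hβ]
      linarith [hβu, hw3, hr'']
    have := hcone w h1 h2
    simp only [hΔ, hq]; linarith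
  obtain ⟨g, hg⟩ := exists_subgradient h hconv q
  -- F1 : -⟪g, w⟫ ≤ Δ
  have F1 : -⟪g, w⟫ ≤ Δ := by
    have := hg p
    have hpq : p - q = -w := by simp [hq]
    rw [hpq, inner_neg_right] at this
    simp only [hΔ]; linarith
  -- F2 : ⟪g, w⟫ ≤ Δ
  have F2 : ⟪g, w⟫ ≤ Δ := by
    have hcone2 : h (p + (2:ℝ) • w) ≤ h p := by
      refine hcone ((2:ℝ) • w) ?_ ?_
      · rw [norm_smul, real_inner_smul_right]
        simp only [Real.norm_ofNat]
        nlinarith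
      · rw [real_inner_smul_right]
        nlinarith
    have := hg (p + (2:ℝ) • w)
    have hpq : p + (2:ℝ) • w - q = w := by
      simp only [hq]
      rw [two_smul]
      abel
    rw [hpq] at this
    simp only [hΔ]; linarith
  set α : ℝ := ⟪g, v⟫ with hα
  clear_value α
  -- F3 : 4 * r'' * α ≤ 2 * Δ
  have F3 : 4 * r'' * α ≤ 2 * Δ := by
    have hcone3 : h (p + (4 * r'') • v) ≤ h p := by
      refine hcone ((4 * r'') • v) ?_ ?_
      · rw [norm_smul, real_inner_smul_right, real_inner_self_eq_norm_sq, hv]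
        simp only [Real.norm_eq_abs, abs_of_pos (by positivity : (0:ℝ) < 4 * r'')]
        nlinarith
      · rw [real_inner_smul_right, real_inner_self_eq_norm_sq, hv]; nlinarith
    have := hg (p + (4 * r'') • v)
    have hpq : p + (4 * r'') • v - q = (4 * r'') • v - w := by
      simp only [hq]; abel
    rw [hpq, inner_sub_right, real_inner_smul_right] at this
    rw [hα]
    linarith [this, hcone3, F2, hΔ]
  set gp : Euc d := g - α • v with hgp
  clear_value gp
  have hgpv : ⟪gp, v⟫ = 0 := by
    simp only [hgp]
    rw [inner_sub_left, real_inner_smul_left, real_inner_self_eq_norm_sq, hv]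
    simp [hα, real_inner_comm]
  -- F4
  have F4 : (5/6) * (4 * r'') * ‖gp‖ ≤ 2 * Δ - 4 * r'' * (c₁/2) * α := by
    rcases eq_or_ne gp 0 with hgp0 | hgp0
    · rw [hgp0, norm_zero, mul_zero]
      nlinarith [F3, hΔ0, hr'', hc0, hc1]
    · have hgpn : 0 < ‖gp‖ := norm_pos_iff.mpr hgp0
      set s₀ : ℝ := Real.sqrt (1 - (c₁/2)^2) with hs₀
      clear_value s₀
      have harg : (0:ℝ) ≤ 1 - (c₁/2)^2 := by nlinarith
      have hs₀sq : s₀^2 = 1 - (c₁/2)^2 := by rw [hs₀]; exact Real.sq_sqrt harg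
      have hs₀ge : (5/6 : ℝ) ≤ s₀ := by
        rw [hs₀, show (5/6 : ℝ) = Real.sqrt ((5/6)^2) by rw [Real.sqrt_sq (by norm_num)]]
        apply Real.sqrt_le_sqrt
        nlinarith
      set t : Euc d := ‖gp‖⁻¹ • gp with ht
      clear_value t
      have hvt : ⟪v, t⟫ = 0 := by
        rw [ht, real_inner_smul_right, real_inner_comm, hgpv, mul_zero]
      have hgt : ⟪g, t⟫ = ‖gp‖ := by
        have hggp : ⟪g, gp⟫ = ‖gp‖ ^ 2 := by
          have hgd : ⟪gp, g⟫ = ⟪gp, gp⟫ + α * ⟪gp, v⟫ := by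
            conv_lhs => rw [show g = gp + α • v by rw [hgp]; abel]
            rw [inner_add_right, real_inner_smul_right]
          rw [real_inner_comm, hgd, hgpv, real_inner_self_eq_norm_sq]; ring
        rw [ht, real_inner_smul_right, hggp]
        field_simp [hgpn.ne']
      have htnorm : ‖t‖ = 1 := by
        rw [ht, norm_smul, Real.norm_eq_abs, abs_of_pos (inv_pos.mpr hgpn)]
        field_simp
      set e : Euc d := (c₁/2) • v + s₀ • t with he
      clear_value e
      have henorm2 : ‖e‖^2 = 1 := by
        rw [he, norm_add_sq_real, real_inner_smul_left, real_inner_smul_right, hvt,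
          norm_smul, norm_smul, htnorm, hv, Real.norm_eq_abs, Real.norm_eq_abs,
          abs_of_nonneg (by linarith : (0:ℝ) ≤ c₁/2),
          abs_of_nonneg (by linarith [hs₀ge] : (0:ℝ) ≤ s₀)]
        ring_nf
        nlinarith [hs₀sq]
      have henorm : ‖e‖ = 1 := by
        have h0 := norm_nonneg e
        have hfac : (‖e‖ - 1) * (‖e‖ + 1) = 0 := by nlinarith [henorm2]
        rcases mul_eq_zero.mp hfac with hcase | hcase
        · linarith
        · linarith
      have hve : ⟪v, e⟫ = c₁/2 := by
        rw [he, inner_add_right, real_inner_smul_right, real_inner_smul_right,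
          real_inner_self_eq_norm_sq, hv, hvt]
        ring
      have hge : ⟪g, e⟫ = (c₁/2) * α + s₀ * ‖gp‖ := by
        rw [he, inner_add_right, real_inner_smul_right, real_inner_smul_right, hgt, ← hα]
      have hcone4 : h (p + (4 * r'') • e) ≤ h p := by
        refine hcone ((4 * r'') • e) ?_ ?_
        · rw [norm_smul, real_inner_smul_right, hve, henorm, Real.norm_eq_abs,
            abs_of_pos (by positivity : (0:ℝ) < 4 * r''), mul_one]
          exact le_of_eq (by ring)
        · rw [real_inner_smul_right, hve]
          have t1 : 2*r''*c₁ ≤ 2*r'' := by nlinarith [hr'', hc1]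
          linarith
      have h6 := hg (p + (4 * r'') • e)
      have hpq6 : p + (4 * r'') • e - q = (4 * r'') • e - w := by
        simp only [hq]; abel
      rw [hpq6, inner_sub_right, real_inner_smul_right, hge] at h6
      have h7 : 4 * r'' * ((c₁/2) * α + s₀ * ‖gp‖) ≤ 2 * Δ := by
        simp only [hΔ]
        linarith [h6, hcone4, F2]
      have h8 := mul_le_mul_of_nonneg_left
        (mul_le_mul_of_nonneg_right hs₀ge (norm_nonneg gp))
        (by positivity : (0:ℝ) ≤ 4 * r'')
      linarith [h7, h8]
  -- F5
  have F5 : |α| * (δ * c₁) ≤ 4 * Δ := by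
    have hδc : δ * c₁ ≤ r'' := by
      have := mul_le_mul_of_nonneg_left hc1.le hδ.le
      linarith
    rcases le_or_gt 0 α with hα0 | hα0
    · rw [abs_of_nonneg hα0]
      have t1 := mul_le_mul_of_nonneg_left hδc hα0
      linarith [t1, F3, hΔ0]
    · rw [abs_of_neg hα0]
      set w' : Euc d := w - β • v with hw'
      clear_value w'
      have hvw' : ⟪v, w'⟫ = 0 := by
        rw [hw', inner_sub_right, real_inner_smul_right, real_inner_self_eq_norm_sq, hv, ← hβ]
        ring
      have hwperp : ‖w'‖ ≤ ‖w‖ := by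
        have hpyth : ‖w‖^2 = β^2 + ‖w'‖^2 := by
          have hwd : w = β • v + w' := by rw [hw']; abel
          calc ‖w‖^2 = ‖β • v + w'‖^2 := by rw [← hwd]
            _ = ‖β • v‖^2 + 2 * ⟪β • v, w'⟫ + ‖w'‖^2 := norm_add_sq_real _ _
            _ = β^2 + ‖w'‖^2 := by
                rw [norm_smul, real_inner_smul_left, hvw', hv, Real.norm_eq_abs]
                rw [mul_one, sq_abs]
                ring
        have hsq : ‖w'‖^2 ≤ ‖w‖^2 := by nlinarith [sq_nonneg β]
        exact le_of_pow_le_pow_left₀ two_ne_zero (norm_nonneg w) hsq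
      have hgw : ⟪g, w⟫ = ⟪gp, w'⟫ + α * β := by
        have hexp : ⟪gp, w'⟫ = ⟪g, w⟫ - α * β := by
          rw [hgp, hw']
          simp only [inner_sub_left, inner_sub_right, real_inner_smul_left,
            real_inner_smul_right]
          rw [real_inner_self_eq_norm_sq, hv, ← hα, ← hβ]
          ring
        rw [hexp]; ring
      have hip : ⟪gp, w'⟫ ≤ ‖gp‖ * ‖w‖ :=
        le_trans (real_inner_le_norm gp w')
          (mul_le_mul_of_nonneg_left hwperp (norm_nonneg gp))
      have hF1' : -Δ ≤ ‖gp‖ * ‖w‖ + α * (c₁ * ‖w‖) := by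
        have hαβ : α * β ≤ α * (c₁ * ‖w‖) := mul_le_mul_of_nonpos_left hw1 hα0.le
        have := F1
        rw [hgw] at this
        linarith [hip, hαβ]
      have hac : (0:ℝ) ≤ (-α) * c₁ := mul_nonneg (by linarith) hc0.le
      have hA1 := mul_le_mul_of_nonneg_left hF1' hr''.le
      have hB1 := mul_le_mul_of_nonneg_right F4 (norm_nonneg w)
      have hC1 := mul_le_mul_of_nonneg_left hw3 hΔ0
      have hD1 := mul_le_mul_of_nonneg_right (mul_le_mul_of_nonneg_left hw2 hac) hr''.le
      have key : ((-α) * (δ * c₁)) * r'' ≤ (4 * Δ) * r'' := by linarith [hA1, hB1, hC1, hD1]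
      exact le_of_mul_le_mul_right key hr''
  -- F7
  have F7 : ‖g‖ * (δ * c₁) ≤ 7 * Δ := by
    have hδc : δ * c₁ ≤ r'' := by
      have := mul_le_mul_of_nonneg_left hc1.le hδ.le
      linarith
    have hδcpos : (0:ℝ) < δ * c₁ := mul_pos hδ hc0
    have hgle : ‖g‖ ≤ |α| + ‖gp‖ := by
      have hgd : g = α • v + gp := by rw [hgp]; abel
      calc ‖g‖ = ‖α • v + gp‖ := by rw [← hgd]
        _ ≤ ‖α • v‖ + ‖gp‖ := norm_add_le _ _
        _ = |α| + ‖gp‖ := by rw [norm_smul, hv, mul_one, Real.norm_eq_abs]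
    have hgpb : ‖gp‖ * (δ * c₁) ≤ 3 * Δ := by
      have hF4' : (10/3) * r'' * ‖gp‖ ≤ 2 * Δ + 2 * r'' * c₁ * |α| := by
        have habs := mul_le_mul_of_nonneg_left (neg_le_abs α)
          (by positivity : (0:ℝ) ≤ 2 * r'' * c₁)
        linarith [F4, habs]
      have hE := mul_le_mul_of_nonneg_right hF4' hδcpos.le
      have hF5' := mul_le_mul_of_nonneg_left F5 (by positivity : (0:ℝ) ≤ 2 * r'' * c₁)
      have hDr := mul_le_mul_of_nonneg_left hδc hΔ0
      have hc1' := mul_le_mul_of_nonneg_left hc1.le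
        (mul_nonneg hΔ0 hr''.le)
      have key : (‖gp‖ * (δ * c₁)) * r'' ≤ (3 * Δ) * r'' := by
        linarith [hE, hF5', hDr, hc1']
      exact le_of_mul_le_mul_right key hr''
    have := mul_le_mul_of_nonneg_right hgle hδcpos.le
    linarith [F5, hgpb]
  -- final
  have hqnorm : max R₀ 1 ≤ ‖q‖ := by
    have hpb : ‖p‖ ≤ ‖q‖ + ‖w‖ := by
      calc ‖p‖ = ‖q - w‖ := by rw [hq]; congr 1; abel
        _ ≤ ‖q‖ + ‖w‖ := norm_sub_le _ _
    have := le_trans hp hpb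
    have h1 := le_max_left R₀ 1
    have h2 := le_max_right R₀ 1
    linarith [hw3]
  have hq1 : (1:ℝ) ≤ ‖q‖ := le_trans (le_max_right _ _) hqnorm
  have hCq : C * ‖q‖ ≤ h q := hR₀ q (le_trans (le_max_left _ _) hqnorm)
  have hgq : h q - h 0 ≤ ⟪g, q⟫ := by
    have := hg 0
    rw [zero_sub, inner_neg_right] at this
    linarith
  have hgq2 : ⟪g, q⟫ ≤ ‖g‖ * ‖q‖ := real_inner_le_norm g q
  have hδcpos : (0:ℝ) < δ * c₁ := mul_pos hδ hc0
  have h8 : (C * ‖q‖ - h 0) * (δ * c₁) ≤ (7 * Δ) * ‖q‖ := by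
    have t2 := mul_le_mul_of_nonneg_right
      (show C * ‖q‖ - h 0 ≤ ‖g‖ * ‖q‖ by linarith) hδcpos.le
    have t3 := mul_le_mul_of_nonneg_right F7 (norm_nonneg q)
    linarith [t2, t3]
  have hAδ : A * (δ * c₁) = 7 := by
    rw [hA]; field_simp
  have h9 : (C * ‖q‖ - h 0) * (δ * c₁)
      = 7 * (|G| + 1) * ‖q‖ + h 0 * (δ * c₁) * (‖q‖ - 1) := by
    calc (C * ‖q‖ - h 0) * (δ * c₁)
        = (A * (δ * c₁)) * (|G| + 1) * ‖q‖ + h 0 * (δ * c₁) * (‖q‖ - 1) := by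
          rw [hC]; ring
      _ = 7 * (|G| + 1) * ‖q‖ + h 0 * (δ * c₁) * (‖q‖ - 1) := by rw [hAδ]
  have t4 : 0 ≤ h 0 * (δ * c₁) * (‖q‖ - 1) :=
    mul_nonneg (mul_nonneg (hpos 0) hδcpos.le) (by linarith)
  have hfinal : (7 * (|G| + 1)) * ‖q‖ ≤ (7 * Δ) * ‖q‖ := by linarith [h8, h9, t4]
  have hq0 : (0:ℝ) < ‖q‖ := by linarith
  have hΔG : 7 * (|G| + 1) ≤ 7 * Δ := le_of_mul_le_mul_right hfinal hq0
  calc G ≤ |G| := le_abs_self G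
    _ < Δ := by linarith


lemma f_ne_top {d : ℕ} (h : Euc d → ℝ) {f : Euc d → EReal} (hconc : IsCConcave h f)
    (x : Euc d) : f x ≠ ⊤ := by
  obtain ⟨T, ⟨p₀, hp₀⟩, hf⟩ := hconc
  rw [hf x]
  exact ne_top_of_le_ne_top (EReal.coe_ne_top _) (iInf₂_le p₀ hp₀)

lemma csuper_bot {d : ℕ} {h : Euc d → ℝ} {f : Euc d → EReal} {x y : Euc d}
    (hy : y ∈ CSuperdiffAt h f x) (hx : f x = ⊥) : ∀ z, f z = ⊥ := by
  intro z
  have := hy z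
  rw [hx, EReal.bot_add] at this
  exact le_bot_iff.mp this

lemma csuper_all {d : ℕ} {h : Euc d → ℝ} {f : Euc d → EReal} (hbot : ∀ z, f z = ⊥)
    (x : Euc d) : CSuperdiffAt h f x = Set.univ := by
  ext y
  simp only [CSuperdiffAt, CSuperdiff, Set.mem_setOf_eq, Set.mem_univ, iff_true]
  intro z
  rw [hbot z]
  exact bot_le

lemma fx_ne_bot {d : ℕ} (hd : 1 ≤ d) {h : Euc d → ℝ} {Q P' : Measure (Euc d)}
    {f : Euc d → EReal} [IsProbabilityMeasure Q]
    (hK : IsKantorovichPotential h Q P' f) {x y : Euc d}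
    (hy : y ∈ CSuperdiffAt h f x) : f x ≠ ⊥ := by
  intro hx
  have hbot := csuper_bot hy hx
  obtain ⟨_, T, hsing, _⟩ := hK
  have hne : (MeasureTheory.ae Q).NeBot := ae_neBot.mpr (IsProbabilityMeasure.ne_zero Q)
  obtain ⟨x₁, hx₁⟩ := hsing.exists
  rw [csuper_all hbot] at hx₁
  have hmem : T x₁ + EuclideanSpace.single (⟨0, hd⟩ : Fin d) (1:ℝ) ∈ ({T x₁} : Set (Euc d)) := by
    rw [← hx₁]; trivial
  have heq := Set.mem_singleton_iff.mp hmem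
  have hzero : EuclideanSpace.single (⟨0, hd⟩ : Fin d) (1:ℝ) = 0 := by
    have := add_eq_left.mp heq
    exact this
  have := congrArg (fun w : Euc d => w (⟨0, hd⟩ : Fin d)) hzero
  rw [EuclideanSpace.single_apply] at this
  simp at this

lemma cmono {d : ℕ} {h : Euc d → ℝ} {f : Euc d → EReal} (hconc : IsCConcave h f)
    {u x y y' : Euc d} (hy : y ∈ CSuperdiffAt h f u) (hy' : y' ∈ CSuperdiffAt h f x)
    (hu : f u ≠ ⊥) (hx : f x ≠ ⊥) :
    h (u - y) + h (x - y') ≤ h (x - y) + h (u - y') := by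
  obtain ⟨a, ha⟩ : ∃ a : ℝ, f u = (a : EReal) :=
    ⟨(f u).toReal, (EReal.coe_toReal (f_ne_top h hconc u) hu).symm⟩
  obtain ⟨b, hb⟩ : ∃ b : ℝ, f x = (b : EReal) :=
    ⟨(f x).toReal, (EReal.coe_toReal (f_ne_top h hconc x) hx).symm⟩
  have h1 := hy x
  have h2 := hy' u
  simp only [CSuperdiffAt, CSuperdiff, Set.mem_setOf_eq] at h1 h2
  rw [ha, hb, ← EReal.coe_add, EReal.coe_le_coe_iff] at h1 h2
  simp only [cost] at h1 h2
  linarith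

lemma hyperplane_null {d : ℕ} (Q : Measure (Euc d)) (hQ : Q ≪ volume) (v u : Euc d)
    (hv : ‖v‖ = 1) : Q {x | ⟪v, x - u⟫ = 0} = 0 := by
  refine hQ ?_
  have h1 : {x : Euc d | ⟪v, x - u⟫ = 0} = ↑(AffineSubspace.mk' u (ℝ ∙ v)ᗮ) := by
    ext x
    rw [SetLike.mem_coe, AffineSubspace.mem_mk',
      Submodule.mem_orthogonal_singleton_iff_inner_left, vsub_eq_sub, real_inner_comm]
    rfl
  rw [h1]
  refine Measure.addHaar_affineSubspace _ _ (fun htop => ?_)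
  have hmem : u + v ∈ AffineSubspace.mk' u (ℝ ∙ v)ᗮ := htop ▸ trivial
  rw [AffineSubspace.mem_mk', vsub_eq_sub, add_sub_cancel_left,
    Submodule.mem_orthogonal_singleton_iff_inner_left,
    real_inner_self_eq_norm_sq, hv] at hmem
  norm_num at hmem

lemma perk {d : ℕ} (hd : 1 ≤ d) (h : Euc d → ℝ) (hpos : ∀ x, 0 ≤ h x)
    (h1 : H1 h) (h2 : H2 h) (h3 : H3 h)
    (Q P : Measure (Euc d)) [IsProbabilityMeasure Q] [IsProbabilityMeasure P]
    (u : Euc d) (ε : ℝ) (hε0 : 0 < ε) (hε1 : ε < 1)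
    (hunb : ¬ IsBounded (contamSet h Q P ε u))
    (c₁ δ r'' η : ℝ) (hc0 : 0 < c₁) (hc1 : c₁ < 1) (hδ : 0 < δ) (hδr : δ ≤ r'')
    (hη : 0 < η) :
    ∃ v : Euc d, ‖v‖ = 1 ∧
      Q {x | c₁ * ‖x - u‖ ≤ ⟪v, x - u⟫ ∧ δ ≤ ‖x - u‖ ∧ ‖x - u‖ ≤ r''}
        ≤ ENNReal.ofReal ε + ENNReal.ofReal η := by
  have hconv : ConvexOn ℝ Set.univ h := h1.convexOn
  have hcont : Continuous h := by
    have := hconv.continuousOn isOpen_univ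
    rwa [continuousOn_univ] at this
  -- Step 1: tail bound for P
  obtain ⟨L, hL0, hL⟩ : ∃ L : ℝ, 0 < L ∧ P {y : Euc d | L ≤ ‖y‖} ≤ ENNReal.ofReal η := by
    set s : ℕ → Set (Euc d) := fun n => {y : Euc d | (n : ℝ) ≤ ‖y‖} with hs
    have hmeas : ∀ n, NullMeasurableSet (s n) P :=
      fun n => (measurableSet_le measurable_const measurable_norm).nullMeasurableSet
    have hanti : Antitone s := by
      intro m n hmn y hy
      simp only [hs, Set.mem_setOf_eq] at hy ⊢
      exact le_trans (by exact_mod_cast Nat.cast_le.mpr hmn) hy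
    have hfin : ∃ n, P (s n) ≠ ∞ := ⟨0, measure_ne_top P _⟩
    have hempty : (⋂ n, s n) = ∅ := by
      ext y
      simp only [Set.mem_iInter, Set.mem_empty_iff_false, iff_false, not_forall]
      obtain ⟨n, hn⟩ := exists_nat_gt ‖y‖
      exact ⟨n, by simp only [hs, Set.mem_setOf_eq]; linarith⟩
    have htend := tendsto_measure_iInter_atTop hmeas hanti hfin
    rw [hempty, measure_empty] at htend
    have hev := htend.eventually_le_const (by
      exact ENNReal.ofReal_pos.mpr hη : (0:ℝ≥0∞) < ENNReal.ofReal η)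
    obtain ⟨n, hn⟩ := hev.exists
    refine ⟨(n : ℝ) + 1, by positivity, le_trans (measure_mono ?_) hn⟩
    intro y hy
    simp only [hs, Set.mem_setOf_eq] at hy ⊢
    linarith
  -- Step 2: bound of h on a compact set
  obtain ⟨CL, hCL⟩ : ∃ CL : ℝ, ∀ y' : Euc d, ‖y'‖ ≤ L → h (u - y') ≤ CL := by
    obtain ⟨CL, hCL⟩ := (isCompact_closedBall (0 : Euc d) L).exists_bound_of_continuousOn
      ((hcont.comp (continuous_const.sub continuous_id)).continuousOn)
    exact ⟨CL, fun y' hy' => le_trans (le_abs_self _)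
      (hCL y' (by simpa [Metric.mem_closedBall, dist_zero_right] using hy'))⟩
  set G : ℝ := CL + 1 with hG
  -- Step 3: the angle
  set θ : ℝ := 2 * Real.arccos (c₁ / 2) with hθdef
  have hc2 : c₁ / 2 < 1 := by linarith
  have hθmem : θ ∈ Set.Ioo 0 Real.pi := by
    constructor
    · have := Real.arccos_pos.mpr hc2
      simp only [hθdef]; linarith
    · have h4 : Real.arccos (c₁/2) = Real.pi / 2 - Real.arcsin (c₁/2) :=
        Real.arccos_eq_pi_div_two_sub_arcsin (c₁/2)
      have h5 : 0 < Real.arcsin (c₁/2) := Real.arcsin_pos.mpr (by linarith)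
      simp only [hθdef]; linarith
  have hcosθ : Real.cos (θ / 2) = c₁ / 2 := by
    rw [hθdef, mul_div_cancel_left₀ _ (two_ne_zero)]
    exact Real.cos_arccos (by linarith) hc2.le
  -- Step 4: H2 and keyDelta
  obtain ⟨M, hM0, hH2⟩ := h2 (4 * r'') (by linarith [lt_of_lt_of_le hδ hδr]) θ hθmem
  obtain ⟨R, hR⟩ := keyDelta h hconv hpos h3 c₁ δ r'' G hc0 hc1 hδ hδr
  -- Step 5: pick a far contamination witness
  rw [isBounded_iff_forall_norm_le] at hunb
  push_neg at hunb
  obtain ⟨y, hyS, hy⟩ := hunb (max M R + ‖u‖ + 1)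
  obtain ⟨μ, hμprob, f, hKant, hyu⟩ := hyS
  set p : Euc d := u - y with hp
  have hpnorm : max M R + 1 ≤ ‖p‖ := by
    have : ‖y‖ - ‖u‖ ≤ ‖p‖ := by
      have := norm_sub_norm_le y u
      rw [show ‖p‖ = ‖y - u‖ by rw [hp, norm_sub_rev]]
      linarith [this]
    linarith
  have hpM : M < ‖p‖ := by
    have := le_max_left M R
    linarith
  have hpR : R ≤ ‖p‖ := by
    have := le_max_right M R
    linarith
  obtain ⟨z, hz0, hzcone⟩ := hH2 p hpM
  have hznorm : 0 < ‖z‖ := norm_pos_iff.mpr hz0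
  set v : Euc d := ‖z‖⁻¹ • z with hv
  have hvnorm : ‖v‖ = 1 := by
    rw [hv, norm_smul, Real.norm_eq_abs, abs_of_pos (inv_pos.mpr hznorm)]
    field_simp
  have hzv : ∀ w : Euc d, (⟪z, w⟫ : ℝ) = ‖z‖ * ⟪v, w⟫ := by
    intro w
    rw [hv, real_inner_smul_left]
    field_simp
  -- Step 6: translated cone property
  have hcone' : ∀ w : Euc d, (c₁ / 2) * ‖w‖ ≤ ⟪v, w⟫ → ⟪v, w⟫ ≤ 4 * r'' →
      h (p + w) ≤ h p := by
    intro w hw1 hw2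
    refine hzcone (p + w) ⟨?_, ?_⟩
    · rw [add_sub_cancel_left, hzv, hcosθ]
      have := mul_le_mul_of_nonneg_left hw1 hznorm.le
      calc ‖w‖ * ‖z‖ * (c₁ / 2) = ‖z‖ * (c₁ / 2 * ‖w‖) := by ring
        _ ≤ ‖z‖ * ⟪v, w⟫ := this
    · rw [add_sub_cancel_left, hzv]
      have := mul_le_mul_of_nonneg_left hw2 hznorm.le
      calc ‖z‖ * ⟪v, w⟫ ≤ ‖z‖ * (4 * r'') := this
        _ = 4 * r'' * ‖z‖ := by ring
  obtain ⟨hconc, T, hsing, hmap⟩ := hKant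
  -- Step 7: T is a.e.-measurable
  have haem : AEMeasurable T Q := by
    by_contra hnot
    rw [Measure.map_of_not_aemeasurable hnot] at hmap
    have h0 : (ENNReal.ofReal (1 - ε) • P + ENNReal.ofReal ε • μ) Set.univ = 0 := by
      rw [← hmap]; rfl
    rw [Measure.add_apply, Measure.smul_apply, Measure.smul_apply, measure_univ,
      measure_univ, smul_eq_mul, smul_eq_mul, mul_one, mul_one] at h0
    have h3' : (0:ℝ≥0∞) < ENNReal.ofReal ε := ENNReal.ofReal_pos.mpr hε0
    have := le_add_self.trans_eq h0  -- ofReal ε ≤ sum = 0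
    simp only [nonpos_iff_eq_zero] at this
    exact h3'.ne' this
  -- Step 8: a.e. pointwise bound
  have hae : {x | c₁ * ‖x - u‖ ≤ ⟪v, x - u⟫ ∧ δ ≤ ‖x - u‖ ∧ ‖x - u‖ ≤ r''}
      ≤ᵐ[Q] T ⁻¹' {y' : Euc d | L ≤ ‖y'‖} := by
    filter_upwards [hsing] with x hx hxA
    obtain ⟨hxA1, hxA2, hxA3⟩ := hxA
    have hTx : T x ∈ CSuperdiffAt h f x := by
      rw [hx]; exact Set.mem_singleton _
    have hfu : f u ≠ ⊥ := fx_ne_bot hd ⟨hconc, T, hsing, hmap⟩ hyu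
    have hfx : f x ≠ ⊥ := fx_ne_bot hd ⟨hconc, T, hsing, hmap⟩ hTx
    have hmono := cmono hconc hyu hTx hfu hfx
    have hkey := hR p v hvnorm hpR hcone' (x - u) hxA1 hxA2 hxA3
    have hpw : p + (x - u) = x - y := by rw [hp]; abel
    rw [hpw] at hkey
    show L ≤ ‖T x‖
    by_contra hTfar
    push_neg at hTfar
    have hCLTx : h (u - T x) ≤ CL := hCL (T x) hTfar.le
    have hp0 : 0 ≤ h (x - T x) := hpos _
    rw [hp] at hkey
    simp only [hG] at hkey
    linarith [hmono, hkey, hCLTx, hp0]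
  -- Step 9: conclude via the pushforward
  refine ⟨v, hvnorm, ?_⟩
  have hfar : MeasurableSet {y' : Euc d | L ≤ ‖y'‖} :=
    measurableSet_le measurable_const measurable_norm
  calc Q {x | c₁ * ‖x - u‖ ≤ ⟪v, x - u⟫ ∧ δ ≤ ‖x - u‖ ∧ ‖x - u‖ ≤ r''}
      ≤ Q (T ⁻¹' {y' : Euc d | L ≤ ‖y'‖}) := measure_mono_ae hae
    _ = (ENNReal.ofReal (1 - ε) • P + ENNReal.ofReal ε • μ) {y' : Euc d | L ≤ ‖y'‖} := by
        rw [← hmap, Measure.map_apply_of_aemeasurable haem hfar]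
    _ = ENNReal.ofReal (1 - ε) * P {y' : Euc d | L ≤ ‖y'‖}
        + ENNReal.ofReal ε * μ {y' : Euc d | L ≤ ‖y'‖} := by
        rw [Measure.add_apply, Measure.smul_apply, Measure.smul_apply, smul_eq_mul, smul_eq_mul]
    _ ≤ 1 * ENNReal.ofReal η + ENNReal.ofReal ε * 1 := by
        refine add_le_add (mul_le_mul' (ENNReal.ofReal_le_one.mpr (by linarith)) hL)
          (mul_le_mul' le_rfl (prob_le_one))
    _ = ENNReal.ofReal ε + ENNReal.ofReal η := by
        rw [one_mul, mul_one, add_comm]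

/-- under (H1)-(H3) and `Q ≪ Leb`, the breakdown point of the optimal transport
map at any `u` is at least the Tukey depth of `u` w.r.t. `Q`. -/
theorem breakdown_ge_tukeyDepth (d : ℕ) (hd : 1 ≤ d) (h : Euc d → ℝ)
    (hpos : ∀ x, 0 ≤ h x) (h1 : H1 h) (h2 : H2 h) (h3 : H3 h)
    (Q P : Measure (Euc d)) [IsProbabilityMeasure Q] [IsProbabilityMeasure P]
    (hQ : Q ≪ volume) (u : Euc d) :
    tukeyDepth Q u ≤ breakdownPoint h Q P u := by
  unfold breakdownPoint
  refine le_iInf₂ fun ε hε => ?_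
  obtain ⟨hε0, hε1, hunb⟩ := hε
  refine ENNReal.le_of_forall_pos_le_add fun η hη _ => ?_
  have hη' : (0:ℝ) < (η:ℝ) := by exact_mod_cast hη
  have hseq : ∀ k : ℕ, ∃ v : Euc d, ‖v‖ = 1 ∧
      Q {x | (1/((k:ℝ)+2)) * ‖x - u‖ ≤ ⟪v, x - u⟫ ∧ (1/((k:ℝ)+1)) ≤ ‖x - u‖ ∧
        ‖x - u‖ ≤ (k:ℝ)+1} ≤ ENNReal.ofReal ε + ENNReal.ofReal (η:ℝ) := by
    intro k
    have hk2 : (0:ℝ) < (k:ℝ)+2 := by positivity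
    have hk1 : (0:ℝ) < (k:ℝ)+1 := by positivity
    refine perk hd h hpos h1 h2 h3 Q P u ε hε0 hε1 hunb
      (1/((k:ℝ)+2)) (1/((k:ℝ)+1)) ((k:ℝ)+1) (η:ℝ) ?_ ?_ ?_ ?_ hη'
    · positivity
    · rw [div_lt_one hk2]; linarith
    · positivity
    · rw [div_le_iff₀ hk1]
      nlinarith [Nat.cast_nonneg (α := ℝ) k]
  choose V hVn hVQ using hseq
  have hVs : ∀ k, V k ∈ Metric.sphere (0 : Euc d) 1 := fun k =>
    mem_sphere_zero_iff_norm.mpr (hVn k)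
  obtain ⟨v, hvmem, φ, hφmono, hφtend⟩ := (isCompact_sphere (0:Euc d) 1).tendsto_subseq hVs
  have hv : ‖v‖ = 1 := mem_sphere_zero_iff_norm.mp hvmem
  set A : ℕ → Set (Euc d) := fun k =>
    {x | (1/((k:ℝ)+2)) * ‖x - u‖ ≤ ⟪V k, x - u⟫ ∧ (1/((k:ℝ)+1)) ≤ ‖x - u‖ ∧
      ‖x - u‖ ≤ (k:ℝ)+1} with hA
  have hincl : {x : Euc d | 0 < ⟪v, x - u⟫} ⊆ ⋃ m, ⋂ j, ⋂ (_ : m ≤ j), A (φ j) := by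
    intro x hx
    simp only [Set.mem_setOf_eq] at hx
    have hxu : 0 < ‖x - u‖ := by
      by_contra hc
      push_neg at hc
      have h0 : ‖x - u‖ = 0 := le_antisymm hc (norm_nonneg _)
      rw [norm_eq_zero.mp h0, inner_zero_right] at hx
      exact lt_irrefl _ hx
    have hφat : Tendsto (fun j => (φ j : ℝ)) atTop atTop :=
      tendsto_natCast_atTop_atTop.comp hφmono.tendsto_atTop
    have e1 : ∀ᶠ j in atTop, (⟪v, x - u⟫:ℝ)/2 < ⟪V (φ j), x - u⟫ := by
      have htnd : Tendsto (fun j => (⟪V (φ j), x - u⟫:ℝ)) atTop (𝓝 ⟪v, x - u⟫) :=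
        hφtend.inner tendsto_const_nhds
      exact htnd.eventually (eventually_gt_nhds (by linarith))
    have htnd2 : Tendsto (fun j => (1/((φ j:ℝ)+2)) * ‖x - u‖) atTop (𝓝 0) := by
      have ha : Tendsto (fun j => ((φ j:ℝ)+2)) atTop atTop :=
        tendsto_atTop_add_const_right _ 2 hφat
      have hb : Tendsto (fun j => ((φ j:ℝ)+2)⁻¹) atTop (𝓝 0) := ha.inv_tendsto_atTop
      have := hb.mul_const ‖x - u‖
      rw [zero_mul] at this
      simpa [one_div] using this
    have e2 : ∀ᶠ j in atTop, (1/((φ j:ℝ)+2)) * ‖x - u‖ < ⟪v, x - u⟫/2 :=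
      htnd2.eventually (eventually_lt_nhds (by linarith))
    have htnd3 : Tendsto (fun j => (1/((φ j:ℝ)+1))) atTop (𝓝 0) := by
      have ha : Tendsto (fun j => ((φ j:ℝ)+1)) atTop atTop :=
        tendsto_atTop_add_const_right _ 1 hφat
      have hb : Tendsto (fun j => ((φ j:ℝ)+1)⁻¹) atTop (𝓝 0) := ha.inv_tendsto_atTop
      simpa [one_div] using hb
    have e3 : ∀ᶠ j in atTop, (1/((φ j:ℝ)+1)) ≤ ‖x - u‖ :=
      htnd3.eventually (eventually_le_nhds hxu)
    have e4 : ∀ᶠ j in atTop, ‖x - u‖ ≤ (φ j:ℝ)+1 :=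
      (tendsto_atTop_add_const_right _ 1 hφat).eventually_ge_atTop ‖x - u‖
    obtain ⟨m, hm⟩ := eventually_atTop.mp (((e1.and e2).and (e3.and e4)))
    refine Set.mem_iUnion.mpr ⟨m, Set.mem_iInter₂.mpr fun j hj => ?_⟩
    obtain ⟨⟨he1, he2⟩, he3, he4⟩ := hm j hj
    exact ⟨le_of_lt (lt_trans he2 he1), he3, he4⟩
  have hBmono : Monotone (fun m => ⋂ j, ⋂ (_ : m ≤ j), A (φ j)) := by
    intro m m' hmm' x hx
    exact Set.mem_iInter₂.mpr fun j hj => Set.mem_iInter₂.mp hx j (le_trans hmm' hj)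
  have hQopen : Q {x | 0 < ⟪v, x - u⟫} ≤ ENNReal.ofReal ε + ENNReal.ofReal (η:ℝ) := by
    calc Q {x | 0 < ⟪v, x - u⟫} ≤ Q (⋃ m, ⋂ j, ⋂ (_ : m ≤ j), A (φ j)) :=
          measure_mono hincl
      _ = ⨆ m, Q (⋂ j, ⋂ (_ : m ≤ j), A (φ j)) := hBmono.measure_iUnion
      _ ≤ ENNReal.ofReal ε + ENNReal.ofReal (η:ℝ) := by
          refine iSup_le fun m => ?_
          exact le_trans (measure_mono (Set.iInter₂_subset m le_rfl)) (hVQ (φ m))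
  have hplane : Q {x : Euc d | ⟪v, x - u⟫ = 0} = 0 := hyperplane_null Q hQ v u hv
  have hclosed : Q {x : Euc d | 0 ≤ ⟪v, x - u⟫} ≤ ENNReal.ofReal ε + ENNReal.ofReal (η:ℝ) := by
    have hsub : {x : Euc d | 0 ≤ ⟪v, x - u⟫}
        ⊆ {x | 0 < ⟪v, x - u⟫} ∪ {x | ⟪v, x - u⟫ = 0} := by
      intro x hx
      simp only [Set.mem_setOf_eq] at hx
      rcases lt_or_eq_of_le hx with hl | he
      · exact Or.inl hl
      · exact Or.inr he.symm
    calc Q {x : Euc d | 0 ≤ ⟪v, x - u⟫}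
        ≤ Q ({x | 0 < ⟪v, x - u⟫} ∪ {x | ⟪v, x - u⟫ = 0}) := measure_mono hsub
      _ ≤ Q {x | 0 < ⟪v, x - u⟫} + Q {x | ⟪v, x - u⟫ = 0} := measure_union_le _ _
      _ ≤ ENNReal.ofReal ε + ENNReal.ofReal (η:ℝ) := by
          rw [hplane, add_zero]; exact hQopen
  have hseteq : {x : Euc d | ⟪-v, x - u⟫ ≤ 0} = {x : Euc d | 0 ≤ ⟪v, x - u⟫} := by
    ext x
    simp only [Set.mem_setOf_eq, inner_neg_left, neg_nonpos]
  have hTD : tukeyDepth Q u ≤ Q {x : Euc d | ⟪-v, x - u⟫ ≤ 0} := by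
    unfold tukeyDepth
    exact iInf₂_le (-v) (by simp [hv])
  rw [hseteq] at hTD
  calc tukeyDepth Q u ≤ ENNReal.ofReal ε + ENNReal.ofReal (η:ℝ) := le_trans hTD hclosed
    _ = ENNReal.ofReal ε + η := by rw [ENNReal.ofReal_coe_nnreal]


end
end
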